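/- arXiv:1502.06925 — 3 statements merged into one kernel-verified Lean document; each statement's English description precedes it below -/
import Mathlib

section
/- Let K ⊆ ℂ be closed and nonpolar, f : K → ℂ continuous, Q lower semicontinuous on K. If the set Σ := {z ∈ K : Q(z) < ∞ and liminf_{(z₁,z₂)→(z,z), z₁≠z₂ ∈ K} |f(z₁)-f(z₂)|/|z₁-z₂| > 0} is not polar, then there exists a probability measure ν on K with E^Q(ν) < ∞. -/
open MeasureTheory
open scoped ENNReal

/-- A set `E ⊆ ℂ` is polar if no compactly supported probability measure carried by `E`
has finite logarithmic energy. -/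
def PolarSet (E : Set ℂ) : Prop :=
  ∀ μ : Measure ℂ, IsProbabilityMeasure μ → μ Eᶜ = 0 →
    (∃ F : Set ℂ, IsCompact F ∧ μ Fᶜ = 0) →
    ¬ Integrable (fun p : ℂ × ℂ => Real.log (dist p.1 p.2)) (μ.prod μ)

/-- Extension of a lower semicontinuous function on a closed set by `⊤` is
lower semicontinuous. -/
lemma lsc_extend {K : Set ℂ} (hK : IsClosed K) {Q Q' : ℂ → EReal}
    (hQ : LowerSemicontinuousOn Q K)
    (he1 : ∀ z ∈ K, Q' z = Q z) (he2 : ∀ z ∉ K, Q' z = ⊤) :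
    LowerSemicontinuous Q' := by
  intro x y hy
  by_cases hx : x ∈ K
  · rw [he1 x hx] at hy
    have h1 : ∀ᶠ z in nhdsWithin x K, y < Q' z := by
      filter_upwards [hQ x hx y hy, self_mem_nhdsWithin] with z h1 h2
      rwa [he1 z h2]
    have h2 : ∀ᶠ z in nhdsWithin x Kᶜ, y < Q' z := by
      filter_upwards [self_mem_nhdsWithin] with z hz
      rw [he2 z hz]
      exact lt_of_lt_of_le hy le_top
    have : nhds x = nhdsWithin x K ⊔ nhdsWithin x Kᶜ := by
      rw [← nhdsWithin_union, Set.union_compl_self, nhdsWithin_univ]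
    rw [this]
    exact Filter.eventually_sup.2 ⟨h1, h2⟩
  · filter_upwards [hK.isOpen_compl.mem_nhds hx] with z hz
    rw [he2 z hz]
    exact lt_of_lt_of_le hy (le_trans ((he2 x hx).symm ▸ le_top) le_top)

/-- Product of scalar multiples of restrictions. -/
lemma smul_restrict_prod (μ : Measure ℂ) [IsProbabilityMeasure μ] (S : Set ℂ) (c : ℝ≥0∞)
    [SigmaFinite (c • μ.restrict S)] :
    (c • μ.restrict S).prod (c • μ.restrict S)
      = (c * c) • ((μ.prod μ).restrict (S ×ˢ S)) := by
  rw [← Measure.prod_restrict]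
  refine Measure.prod_eq fun s t hs ht => ?_
  rw [Measure.smul_apply, Measure.prod_prod, Measure.smul_apply, Measure.smul_apply,
    smul_eq_mul, smul_eq_mul, smul_eq_mul]
  ring

/-- if the set `Σ` of points `z ∈ K` with `Q(z) < ∞` at which the difference
quotient of `f` has positive liminf is not polar, then there is a probability measure `ν`
on `K` of finite weighted energy `E^Q(ν) < ∞`. -/
theorem exists_finite_energy_measure
    (K : Set ℂ) (hK : IsClosed K) (hKnp : ¬ PolarSet K)
    (f : ℂ → ℂ) (hf : ContinuousOn f K)
    (Q : ℂ → EReal) (hQbot : ∀ z, Q z ≠ ⊥) (hQlsc : LowerSemicontinuousOn Q K)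
    (hSigma : ¬ PolarSet {z : ℂ | z ∈ K ∧ Q z < ⊤ ∧
      0 < Filter.liminf (fun p : ℂ × ℂ => dist (f p.1) (f p.2) / dist p.1 p.2)
        (nhdsWithin (z, z) ((K ×ˢ K) \ {p : ℂ × ℂ | p.1 = p.2}))}) :
    ∃ ν : Measure ℂ, IsProbabilityMeasure ν ∧ ν Kᶜ = 0 ∧
      (∃ F : Set ℂ, IsCompact F ∧ ν Fᶜ = 0) ∧
      Integrable (fun p : ℂ × ℂ =>
        Real.log (dist p.1 p.2 * dist (f p.1) (f p.2))) (ν.prod ν) ∧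
      Integrable (fun z => (Q z).toReal) ν ∧ (∀ᵐ z ∂ν, Q z ≠ ⊤) := by
  classical
  set Sig : Set ℂ := {z : ℂ | z ∈ K ∧ Q z < ⊤ ∧
      0 < Filter.liminf (fun p : ℂ × ℂ => dist (f p.1) (f p.2) / dist p.1 p.2)
        (nhdsWithin (z, z) ((K ×ˢ K) \ {p : ℂ × ℂ | p.1 = p.2}))} with hSigdef
  unfold PolarSet at hSigma
  push_neg at hSigma
  obtain ⟨μ, hμprob, hμc, -, hInt⟩ := hSigma
  -- the extended lower semicontinuous function
  set Q' : ℂ → EReal := fun z => if z ∈ K then Q z else (⊤ : EReal) with hQ'def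
  have hQ'lsc : LowerSemicontinuous Q' := lsc_extend hK hQlsc
    (fun z hz => if_pos hz) (fun z hz => if_neg hz)
  have hQ'meas : Measurable Q' := hQ'lsc.measurable
  -- the truncation sets
  set A : ℕ → Set ℂ := fun n => Q' ⁻¹' Set.Icc ((-(n : ℝ) : ℝ) : EReal) (((n : ℝ) : ℝ) : EReal)
      with hAdef
  have hAmeas : ∀ n, MeasurableSet (A n) := fun n => hQ'meas measurableSet_Icc
  have hAK : ∀ n, A n ⊆ K := by
    intro n z hz
    by_contra hzK
    have h2 := hz.2
    rw [hQ'def] at h2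
    simp only [if_neg hzK] at h2
    exact (EReal.coe_ne_top _) (top_le_iff.1 h2)
  have hcover : Sig ⊆ ⋃ n, A n := by
    intro z hz
    obtain ⟨hzK, hzQ, -⟩ := hz
    have hne_top : Q z ≠ ⊤ := hzQ.ne
    have hne_bot : Q z ≠ ⊥ := hQbot z
    have hcoe : ((Q z).toReal : EReal) = Q z := EReal.coe_toReal hne_top hne_bot
    refine Set.mem_iUnion.2 ⟨⌈|(Q z).toReal|⌉₊, ?_⟩
    have habs : |(Q z).toReal| ≤ (⌈|(Q z).toReal|⌉₊ : ℝ) := Nat.le_ceil _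
    obtain ⟨h1, h2⟩ := abs_le.1 habs
    constructor
    · show ((-(⌈|(Q z).toReal|⌉₊ : ℝ) : ℝ) : EReal) ≤ Q' z
      rw [hQ'def]; simp only [if_pos hzK]
      rw [← hcoe]
      exact_mod_cast h1
    · show Q' z ≤ (((⌈|(Q z).toReal|⌉₊ : ℝ) : ℝ) : EReal)
      rw [hQ'def]; simp only [if_pos hzK]
      rw [← hcoe]
      exact_mod_cast h2
  -- find a truncation set of positive measure
  have hiUnion : μ (⋃ n, A n) ≠ 0 := by
    intro h0
    have hS0 : μ Sig = 0 := measure_mono_null hcover h0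
    have : μ Set.univ ≤ μ Sig + μ Sigᶜ := by
      rw [← Set.union_compl_self Sig]
      exact measure_union_le _ _
    rw [measure_univ, hS0, hμc] at this
    simp at this
  obtain ⟨n, hn⟩ : ∃ n, μ (A n) ≠ 0 := by
    by_contra h
    push_neg at h
    exact hiUnion (measure_iUnion_null h)
  -- find a point of `Sig` all of whose neighborhoods meet `A n` in positive measure
  set E : Set ℂ := μ.everywherePosSubset (A n) with hEdef
  have hEae : E =ᵐ[μ] A n := Measure.everywherePosSubset_ae_eq (hAmeas n)
  have hEμ : μ E ≠ 0 := by rw [measure_congr hEae]; exact hn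
  have hESig : μ (E ∩ Sig) ≠ 0 := by
    intro h0
    apply hEμ
    have : E ⊆ (E ∩ Sig) ∪ Sigᶜ := by
      intro z hz
      by_cases h : z ∈ Sig
      · exact Or.inl ⟨hz, h⟩
      · exact Or.inr h
    exact le_antisymm (le_trans (measure_mono this)
      (le_of_eq (by rw [measure_union_null h0 hμc]))) zero_le
  obtain ⟨z₀, hz₀E, hz0S⟩ := nonempty_of_measure_ne_zero hESig
  obtain ⟨hz₀K, hz₀Q, hz₀lim⟩ := hz0S
  -- extract the uniform difference-quotient bound near `z₀`
  set T : Set (ℂ × ℂ) := (K ×ˢ K) \ {p : ℂ × ℂ | p.1 = p.2} with hTdef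
  set u : ℂ × ℂ → ℝ := fun p => dist (f p.1) (f p.2) / dist p.1 p.2 with hudef
  obtain ⟨c, hc0, hcev⟩ : ∃ c, 0 < c ∧ ∀ᶠ p in nhdsWithin (z₀, z₀) T, c ≤ u p := by
    by_contra h
    push_neg at h
    have hle : Filter.liminf u (nhdsWithin (z₀, z₀) T) ≤ 0 := by
      rw [Filter.liminf_eq]
      refine Real.sSup_le (fun a ha => ?_) le_rfl
      by_contra h2
      push_neg at h2
      exact h a h2 (Filter.Eventually.mono ha fun x hx => not_lt.2 hx)
    exact absurd (lt_of_lt_of_le hz₀lim hle) (lt_irrefl 0)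
  rw [eventually_nhdsWithin_iff, Metric.eventually_nhds_iff] at hcev
  obtain ⟨ε, hε, hball⟩ := hcev
  set r : ℝ := ε / 2 with hrdef
  have hr : 0 < r := by positivity
  -- the set carrying the measure
  set S : Set ℂ := Metric.closedBall z₀ r ∩ A n with hSdef
  have hSmeas : MeasurableSet S := measurableSet_closedBall.inter (hAmeas n)
  have hSK : S ⊆ K := fun z hz => hAK n hz.2
  have hSball : S ⊆ Metric.closedBall z₀ r := fun z hz => hz.1
  have hm0 : μ S ≠ 0 := by
    have hmem : S ∈ nhdsWithin z₀ (A n) :=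
      Filter.inter_mem (mem_nhdsWithin_of_mem_nhds (Metric.closedBall_mem_nhds z₀ hr))
        self_mem_nhdsWithin
    exact (hz₀E.2 S hmem).ne'
  have hmtop : μ S ≠ ⊤ := measure_ne_top μ S
  -- the key difference-quotient bound on `S`
  have key : ∀ x ∈ S, ∀ y ∈ S, x ≠ y → c * dist x y ≤ dist (f x) (f y) := by
    intro x hx y hy hxy
    have hmem : ((x, y) : ℂ × ℂ) ∈ T := ⟨⟨hSK hx, hSK hy⟩, by simpa using hxy⟩
    have hd : dist ((x, y) : ℂ × ℂ) (z₀, z₀) < ε := by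
      rw [Prod.dist_eq]
      have h1 : dist x z₀ ≤ r := Metric.mem_closedBall.1 (hSball hx)
      have h2 : dist y z₀ ≤ r := Metric.mem_closedBall.1 (hSball hy)
      have : r < ε := by rw [hrdef]; linarith
      exact sup_lt_iff.2 ⟨lt_of_le_of_lt h1 this, lt_of_le_of_lt h2 this⟩
    have := hball hd hmem
    rw [hudef] at this
    exact (le_div_iff₀ (dist_pos.2 hxy)).1 this
  -- the measure
  set ν : Measure ℂ := (μ S)⁻¹ • μ.restrict S with hνdef
  have hνprob : IsProbabilityMeasure ν := by
    constructor
    rw [hνdef, Measure.smul_apply, Measure.restrict_apply_univ, smul_eq_mul]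
    exact ENNReal.inv_mul_cancel hm0 hmtop
  haveI := hνprob
  have hν_apply : ∀ s : Set ℂ, MeasurableSet s → ν s = (μ S)⁻¹ * μ (s ∩ S) := by
    intro s hs
    rw [hνdef, Measure.smul_apply, Measure.restrict_apply hs, smul_eq_mul]
  have hνSc : ν Sᶜ = 0 := by
    rw [hν_apply Sᶜ hSmeas.compl, Set.compl_inter_self, measure_empty, mul_zero]
  have hae : ∀ᵐ z ∂ν, z ∈ S := by
    rw [MeasureTheory.ae_iff]
    exact hνSc
  have hνK : ν Kᶜ = 0 := by
    rw [hν_apply Kᶜ hK.measurableSet.compl]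
    have : Kᶜ ∩ S = ∅ := by
      apply Set.eq_empty_of_forall_notMem
      intro z hz
      exact hz.1 (hSK hz.2)
    rw [this, measure_empty, mul_zero]
  -- membership in `S` gives bounds on `Q`
  have hQS : ∀ z ∈ S, Q z ≠ ⊤ ∧ Q z ≠ ⊥ ∧ |( Q z).toReal| ≤ (n : ℝ) := by
    intro z hz
    have hzA := hz.2
    have hzK := hSK hz
    obtain ⟨h1, h2⟩ := hzA
    rw [hQ'def] at h1 h2
    simp only [if_pos hzK] at h1 h2
    have hne_top : Q z ≠ ⊤ := by
      intro h
      rw [h] at h2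
      exact (EReal.coe_ne_top _) (top_le_iff.1 h2)
    have hne_bot : Q z ≠ ⊥ := hQbot z
    have hcoe : ((Q z).toReal : EReal) = Q z := EReal.coe_toReal hne_top hne_bot
    rw [← hcoe] at h1 h2
    refine ⟨hne_top, hne_bot, abs_le.2 ⟨?_, ?_⟩⟩
    · exact_mod_cast h1
    · exact_mod_cast h2
  -- the product measure identity
  have hprodeq : ν.prod ν = ((μ S)⁻¹ * (μ S)⁻¹) • ((μ.prod μ).restrict (S ×ˢ S)) := by
    rw [hνdef]
    exact smul_restrict_prod μ S (μ S)⁻¹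
  have hctop : (μ S)⁻¹ * (μ S)⁻¹ ≠ ⊤ :=
    ENNReal.mul_ne_top (ENNReal.inv_ne_top.2 hm0) (ENNReal.inv_ne_top.2 hm0)
  have hIntν : Integrable (fun p : ℂ × ℂ => Real.log (dist p.1 p.2)) (ν.prod ν) := by
    rw [hprodeq]
    exact (hInt.restrict).smul_measure hctop
  -- a.e. membership in `S ×ˢ S`
  have haep : ∀ᵐ p ∂(ν.prod ν), p.1 ∈ S ∧ p.2 ∈ S := by
    rw [MeasureTheory.ae_iff]
    have hsub : {p : ℂ × ℂ | ¬(p.1 ∈ S ∧ p.2 ∈ S)}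
        ⊆ (Sᶜ ×ˢ (Set.univ : Set ℂ)) ∪ ((Set.univ : Set ℂ) ×ˢ Sᶜ) := by
      intro p hp
      by_cases h : p.1 ∈ S
      · exact Or.inr ⟨Set.mem_univ _, fun hh => hp ⟨h, hh⟩⟩
      · exact Or.inl ⟨h, Set.mem_univ _⟩
    refine measure_mono_null hsub ?_
    apply measure_union_null <;> rw [Measure.prod_prod] <;> simp [hνSc]
  -- bound for `f` on `S`
  obtain ⟨C₀, hC₀⟩ := ((isCompact_closedBall z₀ r).inter_left hK).exists_bound_of_continuousOn
    (hf.mono Set.inter_subset_left)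
  set C : ℝ := max C₀ 0 with hCdef
  have hC0 : 0 ≤ C := le_max_right _ _
  have hfb : ∀ z ∈ S, ‖f z‖ ≤ C :=
    fun z hz => le_trans (hC₀ z ⟨hSK hz, hSball hz⟩) (le_max_left _ _)
  set M : ℝ := 2 * r * (2 * C) + 1 with hMdef
  have hM1 : (1 : ℝ) ≤ M := by rw [hMdef]; nlinarith
  have hMlog : 0 ≤ Real.log M := Real.log_nonneg hM1
  -- integrability of the log of the product
  have hfae : AEMeasurable f ν := by
    rw [hνdef]
    exact ((hf.mono hSK).aemeasurable hSmeas).smul_measure _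
  have hf1 : AEMeasurable (fun p : ℂ × ℂ => f p.1) (ν.prod ν) :=
    hfae.comp_quasiMeasurePreserving Measure.quasiMeasurePreserving_fst
  have hf2 : AEMeasurable (fun p : ℂ × ℂ => f p.2) (ν.prod ν) :=
    hfae.comp_quasiMeasurePreserving Measure.quasiMeasurePreserving_snd
  have hdistf : AEMeasurable (fun p : ℂ × ℂ => dist (f p.1) (f p.2)) (ν.prod ν) :=
    continuous_dist.measurable.comp_aemeasurable (hf1.prodMk hf2)
  have hdist : Measurable (fun p : ℂ × ℂ => dist p.1 p.2) := continuous_dist.measurable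
  have hg : AEMeasurable (fun p : ℂ × ℂ =>
      Real.log (dist p.1 p.2 * dist (f p.1) (f p.2))) (ν.prod ν) :=
    Real.measurable_log.comp_aemeasurable (hdist.aemeasurable.mul hdistf)
  have hBint : Integrable (fun p : ℂ × ℂ =>
      (|Real.log c| + Real.log M) + 2 * |Real.log (dist p.1 p.2)|) (ν.prod ν) :=
    (integrable_const _).add ((hIntν.abs).const_mul 2)
  have hIntlog : Integrable (fun p : ℂ × ℂ =>
      Real.log (dist p.1 p.2 * dist (f p.1) (f p.2))) (ν.prod ν) := by
    refine Integrable.mono' hBint hg.aestronglyMeasurable ?_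
    filter_upwards [haep] with p hp
    obtain ⟨hp1, hp2⟩ := hp
    rw [Real.norm_eq_abs]
    by_cases hxy : p.1 = p.2
    · have : dist p.1 p.2 = 0 := by rw [hxy, dist_self]
      rw [this, zero_mul, Real.log_zero, abs_zero]
      positivity
    · have hd : 0 < dist p.1 p.2 := dist_pos.2 hxy
      have hq : c * dist p.1 p.2 ≤ dist (f p.1) (f p.2) := key _ hp1 _ hp2 hxy
      have hdf : 0 < dist (f p.1) (f p.2) := lt_of_lt_of_le (by positivity) hq
      have hP : 0 < dist p.1 p.2 * dist (f p.1) (f p.2) := mul_pos hd hdf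
      have hup : dist p.1 p.2 * dist (f p.1) (f p.2) ≤ M := by
        have h1 : dist p.1 p.2 ≤ 2 * r := by
          have hx := Metric.mem_closedBall.1 (hSball hp1)
          have hy := Metric.mem_closedBall.1 (hSball hp2)
          calc dist p.1 p.2 ≤ dist p.1 z₀ + dist z₀ p.2 := dist_triangle _ _ _
            _ = dist p.1 z₀ + dist p.2 z₀ := by rw [dist_comm z₀]
            _ ≤ 2 * r := by linarith
        have h2 : dist (f p.1) (f p.2) ≤ 2 * C := by
          calc dist (f p.1) (f p.2) ≤ ‖f p.1‖ + ‖f p.2‖ := dist_le_norm_add_norm _ _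
            _ ≤ 2 * C := by
              have := hfb _ hp1
              have := hfb _ hp2
              linarith
        rw [hMdef]
        nlinarith [dist_nonneg (x := p.1) (y := p.2),
          dist_nonneg (x := f p.1) (y := f p.2)]
      have hlogup : Real.log (dist p.1 p.2 * dist (f p.1) (f p.2)) ≤ Real.log M :=
        Real.log_le_log hP hup
      have hlowaux : c * dist p.1 p.2 * dist p.1 p.2
          ≤ dist p.1 p.2 * dist (f p.1) (f p.2) := by
        calc c * dist p.1 p.2 * dist p.1 p.2
            = (c * dist p.1 p.2) * dist p.1 p.2 := by ring
          _ ≤ dist (f p.1) (f p.2) * dist p.1 p.2 :=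
              mul_le_mul_of_nonneg_right hq hd.le
          _ = dist p.1 p.2 * dist (f p.1) (f p.2) := by ring
      have hlog_low : Real.log c + Real.log (dist p.1 p.2) + Real.log (dist p.1 p.2)
          ≤ Real.log (dist p.1 p.2 * dist (f p.1) (f p.2)) := by
        have h0 : (0 : ℝ) < c * dist p.1 p.2 * dist p.1 p.2 := by positivity
        have hle := Real.log_le_log h0 hlowaux
        rw [Real.log_mul (by positivity) hd.ne', Real.log_mul hc0.ne' hd.ne'] at hle
        linarith
      rw [abs_le]
      constructor
      · have h1 := neg_abs_le (Real.log c)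
        have h2 := neg_abs_le (Real.log (dist p.1 p.2))
        linarith
      · have h2 := abs_nonneg (Real.log (dist p.1 p.2))
        have h1 := abs_nonneg (Real.log c)
        linarith
  -- integrability of `Q.toReal`
  have hQm : AEStronglyMeasurable (fun z => (Q z).toReal) ν := by
    refine (hQ'meas.ereal_toReal.aestronglyMeasurable).congr ?_
    filter_upwards [hae] with z hz
    rw [hQ'def]
    simp only [if_pos (hSK hz)]
  have hQint : Integrable (fun z => (Q z).toReal) ν := by
    refine Integrable.mono' (integrable_const ((n : ℝ))) hQm ?_
    filter_upwards [hae] with z hz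
    rw [Real.norm_eq_abs]
    exact (hQS z hz).2.2
  refine ⟨ν, hνprob, hνK, ⟨Metric.closedBall z₀ r, isCompact_closedBall z₀ r, ?_⟩,
    hIntlog, hQint, ?_⟩
  · rw [hν_apply _ measurableSet_closedBall.compl]
    have : (Metric.closedBall z₀ r)ᶜ ∩ S = ∅ := by
      apply Set.eq_empty_of_forall_notMem
      intro z hz
      exact hz.1 (hSball hz.2)
    rw [this, measure_empty, mul_zero]
  · filter_upwards [hae] with z hz
    exact (hQS z hz).1
end

section
/- Let K ⊆ ℂ be compact, nonpolar, Q admissible on K, and ν a finite Borel measure on K satisfying a weighted Bernstein-Markov inequality for the class F_k of functions h_k(z) = p_k(z)q_k(f(z)) with p_k,q_k polynomials of degree ≤ k. Then Z_k := ∫_{K^{k+1}} |VDM_k^Q(z₀,…,z_k)| dν(z₀)⋯dν(z_k) satisfies lim_{k→∞} Z_k^{2/(k(k+1))} = δ^Q(K) := lim_k max_{K^{k+1}} |VDM_k^Q|^{2/(k(k+1))}. -/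
open MeasureTheory

/-- The weighted `f`-Vandermonde
`|VDM_k^Q(z)| = |∏_{i<j}(z_j-z_i)| · |∏_{i<j}(f(z_j)-f(z_i))| · exp(-k·Σ Q(z_i))`. -/
noncomputable def absVdmQ (f : ℂ → ℂ) (Q : ℂ → ℝ) (k : ℕ) (z : Fin (k + 1) → ℂ) : ℝ :=
  norm (∏ p ∈ Finset.univ.filter (fun p : Fin (k + 1) × Fin (k + 1) => p.1 < p.2),
      (z p.2 - z p.1)) *
    norm (∏ p ∈ Finset.univ.filter (fun p : Fin (k + 1) × Fin (k + 1) => p.1 < p.2),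
      (f (z p.2) - f (z p.1))) *
    Real.exp (-(k : ℝ) * ∑ i, Q (z i))

/-- `Z_k = ∫_{K^{k+1}} |VDM_k^Q| dν^{k+1}`. -/
noncomputable def Zk (ν : Measure ℂ) (f : ℂ → ℂ) (Q : ℂ → ℝ) (k : ℕ) : ℝ :=
  ∫ z : Fin (k + 1) → ℂ, absVdmQ f Q k z ∂(Measure.pi fun _ => ν)

/-- `max_{K^{k+1}} |VDM_k^Q|`. -/
noncomputable def maxVdmQ (K : Set ℂ) (f : ℂ → ℂ) (Q : ℂ → ℝ) (k : ℕ) : ℝ :=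
  sSup {v : ℝ | ∃ z : Fin (k + 1) → ℂ, (∀ i, z i ∈ K) ∧ v = absVdmQ f Q k z}

/-- The polynomial hull `K̂` of `K`. -/
def polyHull (K : Set ℂ) : Set ℂ :=
  {z : ℂ | ∀ p : Polynomial ℂ,
    norm (p.eval z) ≤ sSup ((fun w => norm (p.eval w)) '' K)}

lemma abs_prod_pairs_update {k : ℕ} (u : Fin (k+1) → ℂ) (i₀ : Fin (k+1)) (a : ℂ) :
    norm (∏ p ∈ Finset.univ.filter (fun p : Fin (k + 1) × Fin (k + 1) => p.1 < p.2),
        (Function.update u i₀ a p.2 - Function.update u i₀ a p.1))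
      = (∏ j ∈ Finset.univ.erase i₀, norm (a - u j)) *
        norm (∏ p ∈ Finset.univ.filter
            (fun p : Fin (k + 1) × Fin (k + 1) => p.1 < p.2 ∧ p.1 ≠ i₀ ∧ p.2 ≠ i₀),
          (u p.2 - u p.1)) := by
  rw [norm_prod, norm_prod]
  rw [← Finset.prod_filter_mul_prod_filter_not
      (Finset.univ.filter (fun p : Fin (k + 1) × Fin (k + 1) => p.1 < p.2))
      (fun p => p.1 ≠ i₀ ∧ p.2 ≠ i₀)
      (fun p => norm (Function.update u i₀ a p.2 - Function.update u i₀ a p.1)),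
    mul_comm]
  congr 1
  · -- pairs involving i₀
    refine Finset.prod_nbij' (fun p => if p.1 = i₀ then p.2 else p.1)
      (fun j => if i₀ < j then (i₀, j) else (j, i₀)) ?_ ?_ ?_ ?_ ?_
    · intro p hp
      simp only [Finset.mem_filter, Finset.mem_univ, true_and, not_and_or, not_ne_iff] at hp
      obtain ⟨hlt, hcase⟩ := hp
      rcases hcase with h1 | h2
      · subst h1; simp [Finset.mem_erase, (ne_of_gt hlt)]
      · subst h2; simp [Finset.mem_erase, (ne_of_lt hlt)]
    · intro j hj
      simp only [Finset.mem_erase, Finset.mem_univ, and_true] at hj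
      by_cases h : i₀ < j
      · simp [h, Finset.mem_filter, h.ne]
      · have : j < i₀ := lt_of_le_of_ne (not_lt.1 h) hj
        simp [h, Finset.mem_filter, this, this.ne]
    · intro p hp
      simp only [Finset.mem_filter, Finset.mem_univ, true_and, not_and_or, not_ne_iff] at hp
      obtain ⟨hlt, hcase⟩ := hp
      rcases hcase with h1 | h2
      · subst h1; simp [hlt]
      · subst h2; simp [hlt.ne, not_lt.2 hlt.le]
    · intro j hj
      simp only [Finset.mem_erase, Finset.mem_univ, and_true] at hj
      by_cases h : i₀ < j
      · simp [h]
      · simp [h, hj]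
    · intro p hp
      simp only [Finset.mem_filter, Finset.mem_univ, true_and, not_and_or, not_ne_iff] at hp
      obtain ⟨hlt, hcase⟩ := hp
      rcases hcase with h1 | h2
      · subst h1
        simp [Function.update_of_ne (ne_of_gt hlt), norm_sub_rev]
      · subst h2
        simp [Function.update_of_ne (ne_of_lt hlt), hlt.ne]
  · -- pairs not involving i₀
    rw [Finset.filter_filter]
    refine Finset.prod_congr rfl ?_
    intro p hp
    simp only [Finset.mem_filter, Finset.mem_univ, true_and] at hp
    rw [Function.update_of_ne hp.2.2, Function.update_of_ne hp.2.1]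

lemma sum_Q_update {k : ℕ} (Q : ℂ → ℝ) (z : Fin (k+1) → ℂ) (i₀ : Fin (k+1)) (w : ℂ) :
    ∑ j, Q (Function.update z i₀ w j) = Q w + ∑ j ∈ Finset.univ.erase i₀, Q (z j) := by
  have h : (fun j => Q (Function.update z i₀ w j))
      = Function.update (fun j => Q (z j)) i₀ (Q w) := by
    funext j
    by_cases hj : j = i₀
    · subst hj; simp
    · simp [Function.update_of_ne hj]
  rw [h, Finset.sum_update_of_mem (Finset.mem_univ i₀), Finset.sdiff_singleton_eq_erase]

lemma absVdmQ_update (f : ℂ → ℂ) (Q : ℂ → ℝ) (k : ℕ) (z : Fin (k+1) → ℂ)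
    (i₀ : Fin (k+1)) (w : ℂ) :
    absVdmQ f Q k (Function.update z i₀ w)
      = ((∏ j ∈ Finset.univ.erase i₀, norm (w - z j)) *
         (∏ j ∈ Finset.univ.erase i₀, norm (f w - f (z j))) *
         Real.exp (-(k:ℝ) * Q w)) *
        (norm (∏ p ∈ Finset.univ.filter
            (fun p : Fin (k+1) × Fin (k+1) => p.1 < p.2 ∧ p.1 ≠ i₀ ∧ p.2 ≠ i₀),
            (z p.2 - z p.1)) *
         norm (∏ p ∈ Finset.univ.filter
            (fun p : Fin (k+1) × Fin (k+1) => p.1 < p.2 ∧ p.1 ≠ i₀ ∧ p.2 ≠ i₀),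
            (f (z p.2) - f (z p.1))) *
         Real.exp (-(k:ℝ) * ∑ j ∈ Finset.univ.erase i₀, Q (z j))) := by
  have hfz : ∀ j, f (Function.update z i₀ w j)
      = Function.update (fun j => f (z j)) i₀ (f w) j := by
    intro j; by_cases hj : j = i₀
    · subst hj; simp
    · simp [Function.update_of_ne hj]
  unfold absVdmQ
  simp only [hfz]
  rw [abs_prod_pairs_update z i₀ w, abs_prod_pairs_update (fun j => f (z j)) i₀ (f w),
    sum_Q_update Q z i₀ w, mul_add, Real.exp_add]
  ring

lemma abs_eval_prod {n : ℕ} (s : Finset (Fin n)) (c : Fin n → ℂ) (w : ℂ) :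
    norm ((∏ j ∈ s, (Polynomial.X - Polynomial.C (c j))).eval w)
      = ∏ j ∈ s, norm (w - c j) := by
  rw [Polynomial.eval_prod, norm_prod]
  simp

lemma natDegree_prod_X_sub_C_le {n : ℕ} (s : Finset (Fin n)) (c : Fin n → ℂ) :
    (∏ j ∈ s, (Polynomial.X - Polynomial.C (c j))).natDegree ≤ s.card := by
  refine le_trans (Polynomial.natDegree_prod_le _ _) ?_
  simp [Polynomial.natDegree_X_sub_C]

lemma lsc_bddBelow_of_compact {K : Set ℂ} (hK : IsCompact K) {Q : ℂ → ℝ}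
    (hQ : LowerSemicontinuousOn Q K) : ∃ m : ℝ, ∀ z ∈ K, m ≤ Q z := by
  have hV : ∀ x ∈ K, ∃ V : Set ℂ, IsOpen V ∧ x ∈ V ∧ ∀ y ∈ V ∩ K, Q x - 1 < Q y := by
    intro x hx
    have h := hQ x hx (Q x - 1) (by linarith)
    rw [eventually_nhdsWithin_iff] at h
    obtain ⟨V, hVsub, hVopen, hxV⟩ := mem_nhds_iff.1 h
    exact ⟨V, hVopen, hxV, fun y hy => hVsub hy.1 hy.2⟩
  choose! V hVopen hxV hVlt using hV
  obtain ⟨t, htK, hcover⟩ := hK.elim_nhds_subcover V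
    (fun x hx => (hVopen x hx).mem_nhds (hxV x hx))
  rcases t.eq_empty_or_nonempty with rfl | hne
  · exact ⟨0, fun z hz => by simpa using hcover hz⟩
  · refine ⟨t.inf' hne (fun x => Q x - 1), fun z hz => ?_⟩
    obtain ⟨x, hxt, hzV⟩ := Set.mem_iUnion₂.1 (hcover hz)
    exact le_trans (Finset.inf'_le _ hxt) (le_of_lt (hVlt x (htK x hxt) z ⟨hzV, hz⟩))

lemma exists_measurable_extension_lsc {K : Set ℂ} (hKm : MeasurableSet K) {Q : ℂ → ℝ}
    (hQ : LowerSemicontinuousOn Q K) :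
    ∃ Q' : ℂ → ℝ, Measurable Q' ∧ ∀ z ∈ K, Q' z = Q z := by
  have hr : LowerSemicontinuous (fun x : K => Q x) := by
    intro x y hy
    have h := hQ x x.2 y hy
    rw [← map_nhds_subtype_val x, Filter.eventually_map] at h
    exact h
  refine ⟨Function.extend Subtype.val (fun x : K => Q x) (fun _ => 0),
    (MeasurableEmbedding.subtype_coe hKm).measurable_extend hr.measurable measurable_const,
    fun z hz => ?_⟩
  exact Subtype.val_injective.extend_apply _ _ ⟨z, hz⟩

lemma exists_measurable_extension_cont {K : Set ℂ} (hKm : MeasurableSet K) {f : ℂ → ℂ}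
    (hf : ContinuousOn f K) :
    ∃ f' : ℂ → ℂ, Measurable f' ∧ ∀ z ∈ K, f' z = f z := by
  refine ⟨Function.extend Subtype.val (fun x : K => f x) (fun _ => 0),
    (MeasurableEmbedding.subtype_coe hKm).measurable_extend
      (hf.restrict.measurable) measurable_const,
    fun z hz => ?_⟩
  exact Subtype.val_injective.extend_apply _ _ ⟨z, hz⟩

lemma absVdmQ_nonneg (f : ℂ → ℂ) (Q : ℂ → ℝ) (k : ℕ) (z : Fin (k+1) → ℂ) :
    0 ≤ absVdmQ f Q k z := by
  unfold absVdmQ; positivity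

lemma measurable_absVdmQ {f : ℂ → ℂ} {Q : ℂ → ℝ} (hf : Measurable f) (hQ : Measurable Q)
    (k : ℕ) : Measurable (absVdmQ f Q k) := by
  unfold absVdmQ
  refine Measurable.mul (Measurable.mul ?_ ?_) ?_
  · exact continuous_norm.measurable.comp <| Finset.measurable_prod _ fun p _ =>
      (measurable_pi_apply p.2).sub (measurable_pi_apply p.1)
  · exact continuous_norm.measurable.comp <| Finset.measurable_prod _ fun p _ =>
      (hf.comp (measurable_pi_apply p.2)).sub (hf.comp (measurable_pi_apply p.1))
  · exact Real.continuous_exp.measurable.comp <| Measurable.const_mul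
      (Finset.measurable_sum _ fun i _ => hQ.comp (measurable_pi_apply i)) _

lemma absVdmQ_congr {K : Set ℂ} {f f' : ℂ → ℂ} {Q Q' : ℂ → ℝ}
    (hfK : ∀ z ∈ K, f' z = f z) (hQK : ∀ z ∈ K, Q' z = Q z) (k : ℕ)
    {z : Fin (k+1) → ℂ} (hz : ∀ i, z i ∈ K) :
    absVdmQ f' Q' k z = absVdmQ f Q k z := by
  unfold absVdmQ
  have h1 : (∑ i, Q' (z i)) = ∑ i, Q (z i) := Finset.sum_congr rfl fun i _ => hQK _ (hz i)
  have h2 : (∏ p ∈ Finset.univ.filter (fun p : Fin (k + 1) × Fin (k + 1) => p.1 < p.2),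
        (f' (z p.2) - f' (z p.1)))
      = ∏ p ∈ Finset.univ.filter (fun p : Fin (k + 1) × Fin (k + 1) => p.1 < p.2),
        (f (z p.2) - f (z p.1)) :=
    Finset.prod_congr rfl fun p _ => by rw [hfK _ (hz p.2), hfK _ (hz p.1)]
  rw [h1, h2]

open Polynomial in
lemma single_var_step {K : Set ℂ} {f f' : ℂ → ℂ} {Q Q' : ℂ → ℝ} {ν : Measure ℂ}
    (hνK : ν Kᶜ = 0)
    (hf' : Measurable f') (hQ' : Measurable Q')
    (hfK : ∀ z ∈ K, f' z = f z) (hQK : ∀ z ∈ K, Q' z = Q z)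
    {k : ℕ} {c : ℝ} (hc : 0 ≤ c)
    (hBMk : ∀ p q : Polynomial ℂ, p.natDegree ≤ k → q.natDegree ≤ k → ∀ x ∈ K,
      norm (p.eval x * q.eval (f x)) * Real.exp (-(k : ℝ) * Q x) ≤
        c * ∫ w, norm (p.eval w * q.eval (f w)) * Real.exp (-(k : ℝ) * Q w) ∂ν)
    {z : Fin (k+1) → ℂ} (hz : ∀ j, z j ∈ K) (i₀ : Fin (k+1)) :
    ENNReal.ofReal (absVdmQ f' Q' k z)
      ≤ ENNReal.ofReal c *
        ∫⁻ w, ENNReal.ofReal (absVdmQ f' Q' k (Function.update z i₀ w)) ∂ν := by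
  classical
  set p : Polynomial ℂ := ∏ j ∈ Finset.univ.erase i₀, (X - C (z j)) with hp
  set q : Polynomial ℂ := ∏ j ∈ Finset.univ.erase i₀, (X - C (f' (z j))) with hq
  set G' : ℝ := (norm (∏ pr ∈ Finset.univ.filter
        (fun pr : Fin (k+1) × Fin (k+1) => pr.1 < pr.2 ∧ pr.1 ≠ i₀ ∧ pr.2 ≠ i₀),
        (z pr.2 - z pr.1)) *
      norm (∏ pr ∈ Finset.univ.filter
        (fun pr : Fin (k+1) × Fin (k+1) => pr.1 < pr.2 ∧ pr.1 ≠ i₀ ∧ pr.2 ≠ i₀),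
        (f' (z pr.2) - f' (z pr.1))) *
      Real.exp (-(k:ℝ) * ∑ j ∈ Finset.univ.erase i₀, Q' (z j))) with hG'
  have hG'nonneg : 0 ≤ G' := by rw [hG']; positivity
  have hfact : ∀ w, absVdmQ f' Q' k (Function.update z i₀ w)
      = (norm (p.eval w) * norm (q.eval (f' w)) * Real.exp (-(k:ℝ) * Q' w)) * G' := by
    intro w
    rw [absVdmQ_update f' Q' k z i₀ w, hG', hp, hq, abs_eval_prod, abs_eval_prod]
  have hcard : (Finset.univ.erase i₀ : Finset (Fin (k+1))).card = k := by
    rw [Finset.card_erase_of_mem (Finset.mem_univ i₀)]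
    simp
  have hdegp : p.natDegree ≤ k := hcard ▸ natDegree_prod_X_sub_C_le _ _
  have hdegq : q.natDegree ≤ k := hcard ▸ natDegree_prod_X_sub_C_le _ _
  set A : ℂ → ℝ := fun w => norm (p.eval w * q.eval (f w)) * Real.exp (-(k:ℝ) * Q w)
    with hA
  set A' : ℂ → ℝ := fun w =>
      norm (p.eval w) * norm (q.eval (f' w)) * Real.exp (-(k:ℝ) * Q' w) with hA'
  have hA'nonneg : ∀ w, 0 ≤ A' w := fun w => by rw [hA']; positivity
  have hA'meas : Measurable A' := by
    refine Measurable.mul (Measurable.mul ?_ ?_) ?_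
    · exact (continuous_norm.comp p.continuous).measurable
    · exact (continuous_norm.comp q.continuous).measurable.comp hf'
    · exact Real.continuous_exp.measurable.comp (hQ'.const_mul _)
  have haeK : ∀ᵐ w ∂ν, w ∈ K := by
    rw [MeasureTheory.ae_iff]
    exact hνK
  have hAA' : ∫ w, A w ∂ν = ∫ w, A' w ∂ν := by
    refine integral_congr_ae ?_
    filter_upwards [haeK] with w hw
    rw [hA, hA']
    simp only [norm_mul, hfK w hw, hQK w hw]
  have hzfact : absVdmQ f' Q' k z = A (z i₀) * G' := by
    conv_lhs => rw [← Function.update_eq_self i₀ z]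
    rw [hfact (z i₀), hA]
    simp only [norm_mul, hfK _ (hz i₀), hQK _ (hz i₀)]
  have hbm : A (z i₀) ≤ c * ∫ w, A w ∂ν := hBMk p q hdegp hdegq (z i₀) (hz i₀)
  have hAnonneg0 : 0 ≤ A (z i₀) := by rw [hA]; positivity
  have hintA' : ENNReal.ofReal (∫ w, A' w ∂ν) ≤ ∫⁻ w, ENNReal.ofReal (A' w) ∂ν := by
    rw [integral_eq_lintegral_of_nonneg_ae (Filter.Eventually.of_forall hA'nonneg)
      hA'meas.aestronglyMeasurable]
    exact ENNReal.ofReal_toReal_le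
  calc ENNReal.ofReal (absVdmQ f' Q' k z)
      = ENNReal.ofReal (A (z i₀)) * ENNReal.ofReal G' := by
        rw [hzfact, ENNReal.ofReal_mul hAnonneg0]
    _ ≤ (ENNReal.ofReal c * ENNReal.ofReal (∫ w, A' w ∂ν)) * ENNReal.ofReal G' := by
        refine mul_le_mul_left ?_ _
        calc ENNReal.ofReal (A (z i₀)) ≤ ENNReal.ofReal (c * ∫ w, A w ∂ν) :=
              ENNReal.ofReal_le_ofReal hbm
          _ = ENNReal.ofReal c * ENNReal.ofReal (∫ w, A w ∂ν) := ENNReal.ofReal_mul hc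
          _ = ENNReal.ofReal c * ENNReal.ofReal (∫ w, A' w ∂ν) := by rw [hAA']
    _ ≤ (ENNReal.ofReal c * ∫⁻ w, ENNReal.ofReal (A' w) ∂ν) * ENNReal.ofReal G' :=
        mul_le_mul_left (mul_le_mul_right hintA' _) _
    _ = ENNReal.ofReal c * ((∫⁻ w, ENNReal.ofReal (A' w) ∂ν) * ENNReal.ofReal G') := by ring
    _ = ENNReal.ofReal c * ∫⁻ w, ENNReal.ofReal (A' w) * ENNReal.ofReal G' ∂ν := by
        rw [← lintegral_mul_const (ENNReal.ofReal G')
          (show Measurable fun w => ENNReal.ofReal (A' w)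
            from ENNReal.measurable_ofReal.comp hA'meas)]
    _ = ENNReal.ofReal c * ∫⁻ w, ENNReal.ofReal (absVdmQ f' Q' k (Function.update z i₀ w)) ∂ν := by
        congr 1
        refine lintegral_congr fun w => ?_
        rw [hfact w, ENNReal.ofReal_mul (hA'nonneg w)]

lemma lmarginal_bound {K : Set ℂ} {f f' : ℂ → ℂ} {Q Q' : ℂ → ℝ} {ν : Measure ℂ}
    [IsFiniteMeasure ν] (hνK : ν Kᶜ = 0)
    (hf' : Measurable f') (hQ' : Measurable Q')
    (hfK : ∀ z ∈ K, f' z = f z) (hQK : ∀ z ∈ K, Q' z = Q z)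
    {k : ℕ} {c : ℝ} (hc : 0 ≤ c)
    (hBMk : ∀ p q : Polynomial ℂ, p.natDegree ≤ k → q.natDegree ≤ k → ∀ x ∈ K,
      norm (p.eval x * q.eval (f x)) * Real.exp (-(k : ℝ) * Q x) ≤
        c * ∫ w, norm (p.eval w * q.eval (f w)) * Real.exp (-(k : ℝ) * Q w) ∂ν)
    (s : Finset (Fin (k+1))) :
    ∀ z : Fin (k+1) → ℂ, (∀ j, z j ∈ K) →
      ENNReal.ofReal (absVdmQ f' Q' k z)
        ≤ ENNReal.ofReal c ^ s.card *
          MeasureTheory.lmarginal (fun _ => ν) s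
            (fun y => ENNReal.ofReal (absVdmQ f' Q' k y)) z := by
  classical
  have hGmeas : Measurable fun y => ENNReal.ofReal (absVdmQ f' Q' k y) :=
    ENNReal.measurable_ofReal.comp (measurable_absVdmQ hf' hQ' k)
  have haeK : ∀ᵐ w ∂ν, w ∈ K := by rw [MeasureTheory.ae_iff]; exact hνK
  induction s using Finset.induction with
  | empty => intro z hz; simp [MeasureTheory.lmarginal_empty]
  | @insert i₀ s hi ih =>
    intro z hz
    calc ENNReal.ofReal (absVdmQ f' Q' k z)
        ≤ ENNReal.ofReal c *
          ∫⁻ w, ENNReal.ofReal (absVdmQ f' Q' k (Function.update z i₀ w)) ∂ν :=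
          single_var_step hνK hf' hQ' hfK hQK hc hBMk hz i₀
      _ ≤ ENNReal.ofReal c *
          ∫⁻ w, ENNReal.ofReal c ^ s.card *
            MeasureTheory.lmarginal (fun _ => ν) s
              (fun y => ENNReal.ofReal (absVdmQ f' Q' k y)) (Function.update z i₀ w) ∂ν := by
          refine mul_le_mul_right (lintegral_mono_ae ?_) _
          filter_upwards [haeK] with w hw
          refine ih (Function.update z i₀ w) fun j => ?_
          by_cases hj : j = i₀
          · subst hj; simpa using hw
          · simpa [Function.update_of_ne hj] using hz j
      _ = ENNReal.ofReal c ^ (insert i₀ s).card *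
          MeasureTheory.lmarginal (fun _ => ν) (insert i₀ s)
            (fun y => ENNReal.ofReal (absVdmQ f' Q' k y)) z := by
          rw [lintegral_const_mul _
            (show Measurable fun w : ℂ => MeasureTheory.lmarginal (fun _ => ν) s
                (fun y => ENNReal.ofReal (absVdmQ f' Q' k y)) (Function.update z i₀ w)
              from (hGmeas.lmarginal _).comp (measurable_update z)),
            MeasureTheory.lmarginal_insert _ hGmeas hi z,
            Finset.card_insert_of_notMem hi, pow_succ]
          ring

lemma absVdmQ_le_bound {K : Set ℂ} {f : ℂ → ℂ} {Q : ℂ → ℝ} {R Rf m : ℝ}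
    (hR0 : 0 ≤ R) (hRf0 : 0 ≤ Rf)
    (hR : ∀ z ∈ K, norm z ≤ R) (hRf : ∀ z ∈ K, norm (f z) ≤ Rf)
    (hm : ∀ z ∈ K, m ≤ Q z) (k : ℕ) {z : Fin (k+1) → ℂ} (hz : ∀ i, z i ∈ K) :
    absVdmQ f Q k z ≤
      (R + R) ^ (Finset.univ.filter
          (fun p : Fin (k+1) × Fin (k+1) => p.1 < p.2)).card *
        (Rf + Rf) ^ (Finset.univ.filter
          (fun p : Fin (k+1) × Fin (k+1) => p.1 < p.2)).card *
        Real.exp (-(k:ℝ) * ((k+1) * m)) := by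
  unfold absVdmQ
  have habs : ∀ a b : ℂ, norm (a - b) ≤ norm a + norm b := by
    intro a b
    simpa using norm_sub_le a b
  have h1 : norm (∏ p ∈ Finset.univ.filter
      (fun p : Fin (k+1) × Fin (k+1) => p.1 < p.2), (z p.2 - z p.1)) ≤
      (R + R) ^ (Finset.univ.filter
        (fun p : Fin (k+1) × Fin (k+1) => p.1 < p.2)).card := by
    rw [norm_prod, ← Finset.prod_const]
    refine Finset.prod_le_prod (fun p _ => by positivity) fun p _ => ?_
    exact le_trans (habs _ _) (add_le_add (hR _ (hz _)) (hR _ (hz _)))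
  have h2 : norm (∏ p ∈ Finset.univ.filter
      (fun p : Fin (k+1) × Fin (k+1) => p.1 < p.2), (f (z p.2) - f (z p.1))) ≤
      (Rf + Rf) ^ (Finset.univ.filter
        (fun p : Fin (k+1) × Fin (k+1) => p.1 < p.2)).card := by
    rw [norm_prod, ← Finset.prod_const]
    refine Finset.prod_le_prod (fun p _ => by positivity) fun p _ => ?_
    exact le_trans (habs _ _) (add_le_add (hRf _ (hz _)) (hRf _ (hz _)))
  have h3 : Real.exp (-(k:ℝ) * ∑ i, Q (z i)) ≤ Real.exp (-(k:ℝ) * ((k+1) * m)) := by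
    rw [Real.exp_le_exp]
    refine mul_le_mul_of_nonpos_left ?_ (neg_nonpos.2 (Nat.cast_nonneg k))
    calc ((k:ℝ)+1) * m = ((k+1 : ℕ) : ℝ) * m := by push_cast; ring
      _ ≤ ∑ i, Q (z i) := by
          rw [← nsmul_eq_mul]
          have := Finset.card_nsmul_le_sum Finset.univ (fun i => Q (z i)) m
            (fun i _ => hm _ (hz i))
          simpa using this
  exact mul_le_mul (mul_le_mul h1 h2 (by positivity) (by positivity)) h3
    (by positivity) (by positivity)

lemma rpow_pow_aux {x : ℝ} (hx : 0 < x) (k : ℕ) (hk : 1 ≤ k) :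
    (x ^ (k+1)) ^ (2 / ((k:ℝ) * ((k:ℝ)+1))) = Real.exp (Real.log x * (2 / (k:ℝ))) := by
  have hk0 : (k:ℝ) ≠ 0 := Nat.cast_ne_zero.2 (by omega)
  have hk1 : (k:ℝ) + 1 ≠ 0 := by positivity
  rw [← Real.rpow_natCast x (k+1), ← Real.rpow_mul hx.le, Real.rpow_def_of_pos hx]
  congr 1
  push_cast
  field_simp

/-- free energy asymptotics.  If `K ⊆ ℂ` is compact and nonpolar, `Q` is
admissible on `K`, `f` is holomorphic on a neighborhood of the polynomial hull of `K`
(with a compact `D ⊆ U` containing `K` and `f(K)`), and the finite measure `ν` on `K`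
satisfies the weighted Bernstein–Markov inequality for the class
`F_k = {p_k(z)·q_k(f(z))}`, then `Z_k^{2/(k(k+1))}` converges to
`δ^Q(K) = lim_k (max_{K^{k+1}} |VDM_k^Q|)^{2/(k(k+1))}`. -/
theorem Zk_asymptotics
    (K : Set ℂ) (hK : IsCompact K) (hKnp : ¬ PolarSet K)
    (Q : ℂ → ℝ) (hQ : LowerSemicontinuousOn Q K)
    (U : Set ℂ) (hU : IsOpen U) (hKU : polyHull K ⊆ U)
    (f : ℂ → ℂ) (hf : DifferentiableOn ℂ f U)
    (hD : ∃ D : Set ℂ, IsCompact D ∧ D ⊆ U ∧ K ⊆ D ∧ f '' K ⊆ D)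
    (ν : Measure ℂ) [IsFiniteMeasure ν] (hνK : ν Kᶜ = 0)
    -- the weighted Bernstein–Markov inequality for the class `F_k`:
    (hBM : ∀ ε > (0 : ℝ), ∃ C > (0 : ℝ), ∀ k : ℕ, ∀ p q : Polynomial ℂ,
      p.natDegree ≤ k → q.natDegree ≤ k → ∀ z ∈ K,
        norm (p.eval z * q.eval (f z)) * Real.exp (-(k : ℝ) * Q z) ≤
          C * Real.exp (ε * k) *
            ∫ w, norm (p.eval w * q.eval (f w)) * Real.exp (-(k : ℝ) * Q w) ∂ν)
    (δ : ℝ)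
    (hδ : Filter.Tendsto (fun k : ℕ => (maxVdmQ K f Q k) ^ (2 / ((k : ℝ) * (k + 1))))
      Filter.atTop (nhds δ)) :
    Filter.Tendsto (fun k : ℕ => (Zk ν f Q k) ^ (2 / ((k : ℝ) * (k + 1))))
      Filter.atTop (nhds δ) := by
  classical
  obtain ⟨D, hDcomp, hDU, hKD, hfKD⟩ := hD
  have hKU' : K ⊆ U := hKD.trans hDU
  have hKne : K.Nonempty := by
    by_contra h
    rw [Set.not_nonempty_iff_eq_empty] at h
    apply hKnp
    intro μ hμp hμc _
    exfalso
    have h0 : μ Set.univ = 0 := by simpa [h] using hμc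
    simp [hμp.measure_univ] at h0
  obtain ⟨z₀, hz₀⟩ := hKne
  have hKm : MeasurableSet K := hK.isClosed.measurableSet
  have hfc : ContinuousOn f K := (hf.continuousOn).mono hKU'
  obtain ⟨f', hf'm, hf'K⟩ := exists_measurable_extension_cont hKm hfc
  obtain ⟨Q', hQ'm, hQ'K⟩ := exists_measurable_extension_lsc hKm hQ
  obtain ⟨m, hm⟩ := lsc_bddBelow_of_compact hK hQ
  obtain ⟨R₀, hR₀⟩ := isBounded_iff_forall_norm_le.1 hK.isBounded
  obtain ⟨Rf₀, hRf₀⟩ :=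
    isBounded_iff_forall_norm_le.1 (hK.image_of_continuousOn hfc).isBounded
  set R := max R₀ 0 with hRdef
  set Rf := max Rf₀ 0 with hRfdef
  have hR : ∀ z ∈ K, norm z ≤ R := fun z hz =>
    le_trans (by simpa using hR₀ z hz) (le_max_left _ _)
  have hRf : ∀ z ∈ K, norm (f z) ≤ Rf := fun z hz =>
    le_trans (by simpa using hRf₀ (f z) ⟨z, hz, rfl⟩) (le_max_left _ _)
  have hR0 : 0 ≤ R := le_max_right _ _
  have hRf0 : 0 ≤ Rf := le_max_right _ _
  set B : ℕ → ℝ := fun k =>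
    (R + R) ^ (Finset.univ.filter
        (fun p : Fin (k+1) × Fin (k+1) => p.1 < p.2)).card *
      (Rf + Rf) ^ (Finset.univ.filter
        (fun p : Fin (k+1) × Fin (k+1) => p.1 < p.2)).card *
      Real.exp (-(k:ℝ) * ((k+1) * m)) with hB
  have hgB : ∀ k, ∀ z : Fin (k+1) → ℂ, (∀ i, z i ∈ K) → absVdmQ f Q k z ≤ B k :=
    fun k z hz => absVdmQ_le_bound hR0 hRf0 hR hRf hm k hz
  have hBdd : ∀ k, BddAbove {v : ℝ | ∃ z : Fin (k+1) → ℂ,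
      (∀ i, z i ∈ K) ∧ v = absVdmQ f Q k z} := by
    intro k
    refine ⟨B k, ?_⟩
    rintro v ⟨z, hz, rfl⟩
    exact hgB k z hz
  have hM0 : ∀ k, 0 ≤ maxVdmQ K f Q k := by
    intro k
    refine le_trans (absVdmQ_nonneg f Q k (fun _ => z₀)) ?_
    exact le_csSup (hBdd k) ⟨_, fun _ => hz₀, rfl⟩
  have hvM : ∀ k (z : Fin (k+1) → ℂ), (∀ i, z i ∈ K) →
      absVdmQ f Q k z ≤ maxVdmQ K f Q k :=
    fun k z hz => le_csSup (hBdd k) ⟨z, hz, rfl⟩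
  have hπae : ∀ k, ∀ᵐ z ∂(Measure.pi fun _ : Fin (k+1) => ν), ∀ j, z j ∈ K := by
    intro k
    rw [MeasureTheory.ae_all_iff]
    intro j
    rw [MeasureTheory.ae_iff]
    exact Measure.pi_eval_preimage_null (fun _ => ν) hνK
  have hgae : ∀ k, (absVdmQ f' Q' k)
      =ᵐ[Measure.pi fun _ : Fin (k+1) => ν] (absVdmQ f Q k) := by
    intro k
    filter_upwards [hπae k] with z hz
    exact absVdmQ_congr hf'K hQ'K k hz
  have hmeasg : ∀ k, AEStronglyMeasurable (absVdmQ f Q k)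
      (Measure.pi fun _ : Fin (k+1) => ν) :=
    fun k => ((measurable_absVdmQ hf'm hQ'm k).aestronglyMeasurable).congr (hgae k)
  have hInt : ∀ k, Integrable (absVdmQ f Q k) (Measure.pi fun _ : Fin (k+1) => ν) := by
    intro k
    refine Integrable.mono' (integrable_const (B k)) (hmeasg k) ?_
    filter_upwards [hπae k] with z hz
    rw [Real.norm_eq_abs, abs_of_nonneg (absVdmQ_nonneg f Q k z)]
    exact hgB k z hz
  have hZ0 : ∀ k, 0 ≤ Zk ν f Q k := fun k => integral_nonneg fun z => absVdmQ_nonneg f Q k z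
  set νu : ℝ := (ν Set.univ).toReal with hνudef
  have hνu0 : 0 ≤ νu := ENNReal.toReal_nonneg
  have hupper : ∀ k, Zk ν f Q k ≤ νu ^ (k+1) * maxVdmQ K f Q k := by
    intro k
    have h1 : Zk ν f Q k ≤ ∫ _z : Fin (k+1) → ℂ, maxVdmQ K f Q k
        ∂(Measure.pi fun _ : Fin (k+1) => ν) := by
      refine integral_mono_ae (hInt k) (integrable_const _) ?_
      filter_upwards [hπae k] with z hz
      exact hvM k z hz
    rw [integral_const] at h1
    refine le_trans h1 ?_
    rw [smul_eq_mul]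
    refine mul_le_mul_of_nonneg_right (le_of_eq ?_) (hM0 k)
    have hpi : (Measure.pi fun _ : Fin (k+1) => ν) Set.univ = (ν Set.univ) ^ (k+1) := by
      rw [Measure.pi_univ]
      simp [Finset.prod_const]
    rw [measureReal_def, hpi, ENNReal.toReal_pow]
  have hνupos : 0 < νu := by
    obtain ⟨C₁, hC₁, h⟩ := hBM 1 one_pos
    have h0 := h 0 1 1 (by simp) (by simp) z₀ hz₀
    simp only [Polynomial.eval_one, mul_one, one_mul, norm_one, Nat.cast_zero, neg_zero,
      zero_mul, Real.exp_zero, mul_zero, CharP.cast_eq_zero] at h0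
    rw [integral_const, smul_eq_mul, mul_one] at h0
    nlinarith [h0, hC₁, hνu0, show ν.real Set.univ = νu from rfl]
  have hlowkey : ∀ ε : ℝ, 0 < ε → ∃ C : ℝ, 0 < C ∧ ∀ k,
      maxVdmQ K f Q k ≤ (C * Real.exp (ε * k)) ^ (k+1) * Zk ν f Q k := by
    intro ε hε
    obtain ⟨C, hC, h⟩ := hBM ε hε
    refine ⟨C, hC, fun k => ?_⟩
    have hcpos : (0:ℝ) < C * Real.exp (ε * k) := by positivity
    have hrhs0 : 0 ≤ (C * Real.exp (ε * k)) ^ (k+1) * Zk ν f Q k :=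
      mul_nonneg (pow_nonneg hcpos.le _) (hZ0 k)
    have hbound : ∀ z : Fin (k+1) → ℂ, (∀ j, z j ∈ K) →
        absVdmQ f Q k z ≤ (C * Real.exp (ε * k)) ^ (k+1) * Zk ν f Q k := by
      intro z hz
      have hmain := lmarginal_bound hνK hf'm hQ'm hf'K hQ'K hcpos.le (h k) Finset.univ z hz
      simp only [MeasureTheory.lmarginal_univ] at hmain
      have hcard : (Finset.univ : Finset (Fin (k+1))).card = k+1 := by simp
      have hlint : (∫⁻ y, ENNReal.ofReal (absVdmQ f' Q' k y)
          ∂(Measure.pi fun _ : Fin (k+1) => ν)) = ENNReal.ofReal (Zk ν f Q k) := by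
        have heq : Zk ν f Q k = ∫ z : Fin (k+1) → ℂ, absVdmQ f Q k z
            ∂(Measure.pi fun _ => ν) := rfl
        rw [heq, MeasureTheory.ofReal_integral_eq_lintegral_ofReal (hInt k)
          (Filter.Eventually.of_forall fun z => absVdmQ_nonneg f Q k z)]
        refine lintegral_congr_ae ((hgae k).mono fun z hz => by simp only [hz])
      rw [hcard, hlint] at hmain
      have h2 : ENNReal.ofReal (absVdmQ f Q k z)
          ≤ ENNReal.ofReal ((C * Real.exp (ε * k)) ^ (k+1) * Zk ν f Q k) := by
        rw [← absVdmQ_congr hf'K hQ'K k hz,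
          ENNReal.ofReal_mul (pow_nonneg hcpos.le _), ENNReal.ofReal_pow hcpos.le]
        exact hmain
      rw [ENNReal.ofReal_le_ofReal_iff hrhs0] at h2
      exact h2
    have : sSup {v : ℝ | ∃ z : Fin (k+1) → ℂ, (∀ i, z i ∈ K) ∧ v = absVdmQ f Q k z}
        ≤ (C * Real.exp (ε * k)) ^ (k+1) * Zk ν f Q k := by
      refine Real.sSup_le ?_ hrhs0
      rintro v ⟨z, hz, rfl⟩
      exact hbound z hz
    exact this
  -- limit bookkeeping
  have he0 : ∀ k : ℕ, (0:ℝ) ≤ 2 / ((k:ℝ) * ((k:ℝ)+1)) := fun k => by positivity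
  have h2k : Filter.Tendsto (fun k : ℕ => 2/(k:ℝ)) Filter.atTop (nhds 0) :=
    tendsto_const_div_atTop_nhds_zero_nat 2
  have hup : ∀ k : ℕ, 1 ≤ k → Zk ν f Q k ^ (2 / ((k:ℝ)*((k:ℝ)+1)))
      ≤ maxVdmQ K f Q k ^ (2 / ((k:ℝ)*((k:ℝ)+1))) * Real.exp (Real.log νu * (2/(k:ℝ))) := by
    intro k hk
    have h1 := Real.rpow_le_rpow (hZ0 k) (hupper k) (he0 k)
    rw [Real.mul_rpow (pow_nonneg hνu0 _) (hM0 k), rpow_pow_aux hνupos k hk] at h1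
    exact h1.trans_eq (mul_comm _ _)
  have hlow : ∀ (ε C : ℝ), 0 < ε → 0 < C →
      (∀ k, maxVdmQ K f Q k ≤ (C * Real.exp (ε * k)) ^ (k+1) * Zk ν f Q k) →
      ∀ k : ℕ, 1 ≤ k →
      Real.exp (-(Real.log C * (2/(k:ℝ)) + 2*ε)) * maxVdmQ K f Q k ^ (2 / ((k:ℝ)*((k:ℝ)+1)))
        ≤ Zk ν f Q k ^ (2 / ((k:ℝ)*((k:ℝ)+1))) := by
    intro ε C hε hC hkey k hk
    have hcpos : (0:ℝ) < C * Real.exp (ε * k) := by positivity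
    have h1 := Real.rpow_le_rpow (hM0 k) (hkey k) (he0 k)
    rw [Real.mul_rpow (pow_nonneg hcpos.le _) (hZ0 k), rpow_pow_aux hcpos k hk] at h1
    have hk0 : (k:ℝ) ≠ 0 := Nat.cast_ne_zero.2 (by omega)
    have hlog : Real.log (C * Real.exp (ε * k)) * (2/(k:ℝ))
        = Real.log C * (2/(k:ℝ)) + 2*ε := by
      rw [Real.log_mul hC.ne' (Real.exp_ne_zero _), Real.log_exp]
      field_simp
    rw [hlog] at h1
    calc Real.exp (-(Real.log C * (2/(k:ℝ)) + 2*ε)) * maxVdmQ K f Q k ^ (2 / ((k:ℝ)*((k:ℝ)+1)))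
        ≤ Real.exp (-(Real.log C * (2/(k:ℝ)) + 2*ε)) *
          (Real.exp (Real.log C * (2/(k:ℝ)) + 2*ε) * Zk ν f Q k ^ (2 / ((k:ℝ)*((k:ℝ)+1)))) :=
          mul_le_mul_of_nonneg_left h1 (Real.exp_nonneg _)
      _ = Zk ν f Q k ^ (2 / ((k:ℝ)*((k:ℝ)+1))) := by
          rw [← mul_assoc, ← Real.exp_add, neg_add_cancel, Real.exp_zero, one_mul]
  rw [tendsto_order]
  constructor
  · intro c hc
    rcases lt_or_ge c 0 with hc0 | hc0
    · exact Filter.Eventually.of_forall fun k =>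
        lt_of_lt_of_le hc0 (Real.rpow_nonneg (hZ0 k) _)
    · have hcont : Filter.Tendsto (fun ε : ℝ => c * Real.exp (2*ε)) (nhds 0) (nhds c) := by
        have h1 : Continuous fun ε : ℝ => c * Real.exp (2*ε) :=
          continuous_const.mul (Real.continuous_exp.comp (continuous_const.mul continuous_id))
        have := h1.tendsto 0
        simpa using this
      have hev : ∀ᶠ ε in nhds (0:ℝ), c * Real.exp (2*ε) < δ := hcont.eventually_lt_const hc
      obtain ⟨ε, hεlt, hεpos⟩ :=
        ((hev.filter_mono (nhdsWithin_le_nhds : nhdsWithin (0:ℝ) (Set.Ioi 0) ≤ nhds 0)).and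
          (eventually_mem_nhdsWithin : ∀ᶠ x in nhdsWithin (0:ℝ) (Set.Ioi 0), x ∈ Set.Ioi 0)).exists
      obtain ⟨C, hC, hkey⟩ := hlowkey ε hεpos
      have h1 : Filter.Tendsto (fun k : ℕ => -(Real.log C * (2/(k:ℝ)) + 2*ε))
          Filter.atTop (nhds (-(2*ε))) := by
        have h2 : Filter.Tendsto (fun k : ℕ => Real.log C * (2/(k:ℝ)) + 2*ε)
            Filter.atTop (nhds (Real.log C * 0 + 2*ε)) :=
          (h2k.const_mul (Real.log C)).add_const (2*ε)
        rw [mul_zero, zero_add] at h2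
        exact h2.neg
      have hlim : Filter.Tendsto (fun k : ℕ =>
          Real.exp (-(Real.log C * (2/(k:ℝ)) + 2*ε)) *
            maxVdmQ K f Q k ^ (2 / ((k:ℝ)*((k:ℝ)+1))))
          Filter.atTop (nhds (Real.exp (-(2*ε)) * δ)) := by
        exact ((Real.continuous_exp.tendsto _).comp h1).mul hδ
      have hδgt : c < Real.exp (-(2*ε)) * δ := by
        have h3 : c * Real.exp (2*ε) * Real.exp (-(2*ε)) < δ * Real.exp (-(2*ε)) :=
          mul_lt_mul_of_pos_right hεlt (Real.exp_pos _)
        rw [mul_assoc, ← Real.exp_add, add_neg_cancel, Real.exp_zero, mul_one] at h3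
        linarith [h3, mul_comm (Real.exp (-(2*ε))) δ]
      have hfin := hlim.eventually_const_lt hδgt
      filter_upwards [hfin, Filter.eventually_ge_atTop 1] with k hk1 hk2
      exact lt_of_lt_of_le hk1 (hlow ε C hεpos hC hkey k hk2)
  · intro c hc
    have hexp : Filter.Tendsto (fun k : ℕ => Real.exp (Real.log νu * (2/(k:ℝ))))
        Filter.atTop (nhds 1) := by
      have h2 : Filter.Tendsto (fun k : ℕ => Real.log νu * (2/(k:ℝ)))
          Filter.atTop (nhds (Real.log νu * 0)) := h2k.const_mul (Real.log νu)
      rw [mul_zero] at h2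
      have := (Real.continuous_exp.tendsto _).comp h2
      rwa [Real.exp_zero] at this
    have hlim : Filter.Tendsto (fun k : ℕ =>
        maxVdmQ K f Q k ^ (2 / ((k:ℝ)*((k:ℝ)+1))) * Real.exp (Real.log νu * (2/(k:ℝ))))
        Filter.atTop (nhds (δ * 1)) := hδ.mul hexp
    rw [mul_one] at hlim
    have hfin := hlim.eventually_lt_const hc
    filter_upwards [hfin, Filter.eventually_ge_atTop 1] with k hk1 hk2
    exact lt_of_le_of_lt (hup k hk2) hk1
end

section
/- Let K ⊆ ℂ be closed and nonpolar, f : K → ℂ continuous, Q f-admissible on K, and μ a probability measure on K. Then there exist an increasing sequence of compact sets K_m ⊆ K and probability measures μ_m supported on K_m such that μ_m → μ weakly and E^{Q|_{K_m}}(μ_m) → E^Q(μ) as m → ∞ (the limit possibly +∞). -/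
open MeasureTheory
open scoped ENNReal

section Aux
open Set Filter Topology

lemma lsc_bddBelow_of_isCompact {S : Set ℂ} (hS : IsCompact S) {Q : ℂ → ℝ}
    (hQ : LowerSemicontinuousOn Q S) : ∃ C : ℝ, ∀ x ∈ S, C ≤ Q x := by
  have h : ∀ x ∈ S, ∃ U : Set ℂ, IsOpen U ∧ x ∈ U ∧ ∀ y ∈ U ∩ S, Q x - 1 < Q y := by
    intro x hx
    have := hQ x hx (Q x - 1) (by linarith)
    rcases mem_nhdsWithin.1 this with ⟨U, hUo, hxU, hU⟩
    exact ⟨U, hUo, hxU, fun y hy => hU hy⟩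
  choose! U hUo hxU hU using h
  rcases hS.elim_nhds_subcover' (fun x hx => U x) (fun x hx => (hUo x hx).mem_nhds (hxU x hx))
    with ⟨t, hcov⟩
  rcases t.eq_empty_or_nonempty with rfl | hne
  · refine ⟨0, fun x hx => ?_⟩
    have := hcov hx
    simp at this
  · refine ⟨t.inf' hne (fun x => Q x - 1), fun x hx => ?_⟩
    rcases Set.mem_iUnion₂.1 (hcov hx) with ⟨z, hz, hxz⟩
    calc t.inf' hne (fun x => Q x - 1) ≤ Q (z : ℂ) - 1 := Finset.inf'_le _ hz
      _ ≤ Q x := le_of_lt (hU (z : ℂ) z.2 x ⟨hxz, hx⟩)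

lemma lsc_indicator_measurable {K : Set ℂ} (hK : IsClosed K) {Q : ℂ → ℝ}
    (hQ : LowerSemicontinuousOn Q K) : Measurable (K.indicator Q) := by
  apply measurable_of_Ioi
  intro a
  have h1 : MeasurableSet {x | x ∈ K ∧ a < Q x} := by
    have h : ∀ x, x ∈ K → a < Q x → ∃ U : Set ℂ, IsOpen U ∧ x ∈ U ∧ ∀ y ∈ U ∩ K, a < Q y := by
      intro x hx hax
      rcases mem_nhdsWithin.1 (hQ x hx a hax) with ⟨U, hUo, hxU, hU⟩
      exact ⟨U, hUo, hxU, fun y hy => hU hy⟩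
    choose! U hUo hxU hU using h
    have heq : {x | x ∈ K ∧ a < Q x} = K ∩ ⋃ x ∈ {x | x ∈ K ∧ a < Q x}, U x := by
      ext y
      constructor
      · intro hy
        exact ⟨hy.1, Set.mem_biUnion hy (hxU y hy.1 hy.2)⟩
      · rintro ⟨hyK, hyU⟩
        rcases Set.mem_iUnion₂.1 hyU with ⟨x, hx, hyx⟩
        exact ⟨hyK, hU x hx.1 hx.2 y ⟨hyx, hyK⟩⟩
    rw [heq]
    exact hK.measurableSet.inter
      (isOpen_biUnion fun x hx => hUo x hx.1 hx.2).measurableSet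
  have heq : K.indicator Q ⁻¹' Set.Ioi a
      = {x | x ∈ K ∧ a < Q x} ∪ (if a < 0 then Kᶜ else ∅) := by
    ext x
    by_cases hx : x ∈ K <;> split_ifs with ha <;>
      simp [Set.indicator_apply, hx, ha, Set.mem_Ioi]
  rw [heq]
  refine h1.union ?_
  split_ifs
  · exact hK.measurableSet.compl
  · exact MeasurableSet.empty

lemma smul_prod_smul {ρ : Measure ℂ} [IsFiniteMeasure ρ] (c : ℝ≥0∞) (hc : c ≠ ∞) :
    (c • ρ).prod (c • ρ) = (c * c) • ρ.prod ρ := by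
  have : IsFiniteMeasure (c • ρ) := by
    constructor
    rw [Measure.smul_apply, smul_eq_mul]
    exact ENNReal.mul_lt_top hc.lt_top (measure_lt_top ρ _)
  refine Measure.prod_eq fun s t hs ht => ?_
  rw [Measure.smul_apply, Measure.prod_prod, Measure.smul_apply, Measure.smul_apply,
    smul_eq_mul, smul_eq_mul, smul_eq_mul, mul_mul_mul_comm]

lemma exists_cont_ext {K : Set ℂ} (hK : IsClosed K) {f : ℂ → ℂ} (hf : ContinuousOn f K) :
    ∃ F : ℂ → ℂ, Continuous F ∧ ∀ x ∈ K, F x = f x := by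
  obtain ⟨G, hG⟩ := ContinuousMap.exists_restrict_eq hK (⟨K.restrict f, hf.restrict⟩ : C(K, ℂ))
  refine ⟨G, G.continuous, fun x hx => ?_⟩
  have := congrFun (congrArg (fun h : C(K, ℂ) => (h : K → ℂ)) hG) ⟨x, hx⟩
  simp at this; exact this

lemma dist_sq_le_aux (x y : ℂ) :
    dist x y ^ 2 ≤ (1 + ‖x‖ ^ 2) * (1 + ‖y‖ ^ 2) := by
  have h1 : dist x y ≤ ‖x‖ + ‖y‖ := by
    rw [Complex.dist_eq]
    simpa [sub_eq_add_neg] using norm_add_le x (-y)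
  have h2 : (0:ℝ) ≤ ‖x‖ := norm_nonneg x
  have h3 : (0:ℝ) ≤ ‖y‖ := norm_nonneg y
  nlinarith [sq_nonneg (‖x‖ * ‖y‖ - 1), dist_nonneg (x := x) (y := y)]

lemma log_kernel_bound (f : ℂ → ℂ) (x y : ℂ) :
    Real.log (dist x y * dist (f x) (f y)) ≤
      1/2 * Real.log ((1 + ‖x‖ ^ 2) * (1 + ‖f x‖ ^ 2))
      + 1/2 * Real.log ((1 + ‖y‖ ^ 2) * (1 + ‖f y‖ ^ 2)) := by
  set a := (1 + ‖x‖ ^ 2) * (1 + ‖f x‖ ^ 2) with ha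
  set b := (1 + ‖y‖ ^ 2) * (1 + ‖f y‖ ^ 2) with hb
  have ha1 : (1:ℝ) ≤ a := by
    have := norm_nonneg x; have := norm_nonneg (f x); nlinarith
  have hb1 : (1:ℝ) ≤ b := by
    have := norm_nonneg y; have := norm_nonneg (f y); nlinarith
  have hd2 : (dist x y * dist (f x) (f y)) ^ 2 ≤ a * b := by
    have k1 := dist_sq_le_aux x y
    have k2 := dist_sq_le_aux (f x) (f y)
    have h2 : (0:ℝ) ≤ dist (f x) (f y) ^ 2 := sq_nonneg _
    calc (dist x y * dist (f x) (f y)) ^ 2 = dist x y ^ 2 * dist (f x) (f y) ^ 2 := by ring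
      _ ≤ ((1 + ‖x‖ ^ 2) * (1 + ‖y‖ ^ 2)) *
          ((1 + ‖f x‖ ^ 2) * (1 + ‖f y‖ ^ 2)) := by
            apply mul_le_mul k1 k2 h2 (by nlinarith [norm_nonneg x, norm_nonneg y])
      _ = a * b := by ring
  rcases eq_or_lt_of_le (mul_nonneg dist_nonneg dist_nonneg :
      (0:ℝ) ≤ dist x y * dist (f x) (f y)) with h0 | hpos
  · rw [← h0, Real.log_zero]
    have := Real.log_nonneg ha1
    have := Real.log_nonneg hb1
    linarith
  · have hlog : Real.log ((dist x y * dist (f x) (f y)) ^ 2) ≤ Real.log (a * b) :=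
      Real.log_le_log (by positivity) hd2
    have hab : Real.log (a * b) = Real.log a + Real.log b :=
      Real.log_mul (by linarith) (by linarith)
    rw [Real.log_pow, hab] at hlog
    push_cast at hlog
    linarith

lemma tendsto_setLIntegral_mono_sets {α : Type*} [MeasurableSpace α] (ν : Measure α)
    (S : ℕ → Set α) (hSm : ∀ m, MeasurableSet (S m)) (hmono : Monotone S)
    (g : α → ℝ≥0∞) (hg : Measurable g) (hfull : ν ((⋃ m, S m)ᶜ) = 0) :
    Tendsto (fun m => ∫⁻ x in S m, g x ∂ν) atTop (𝓝 (∫⁻ x, g x ∂ν)) := by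
  have him : Monotone fun m => (S m).indicator g := fun m n h x =>
    Set.indicator_le_indicator_of_subset (hmono h) (fun a => zero_le) x
  have key := lintegral_iSup (μ := ν) (fun m => hg.indicator (hSm m)) him
  have hsup : ∀ x, (⨆ m, (S m).indicator g x) = (⋃ m, S m).indicator g x := by
    intro x
    by_cases hx : x ∈ ⋃ m, S m
    · rcases Set.mem_iUnion.1 hx with ⟨m₀, hm₀⟩
      rw [Set.indicator_of_mem hx]
      refine le_antisymm (iSup_le fun m => Set.indicator_le_self _ _ x) ?_
      exact le_iSup_of_le m₀ (by rw [Set.indicator_of_mem hm₀])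
    · rw [Set.indicator_of_notMem hx]
      refine le_antisymm (iSup_le fun m => ?_) zero_le
      rw [Set.indicator_of_notMem (fun h => hx (Set.mem_iUnion.2 ⟨m, h⟩))]
  have hres : ν.restrict (⋃ m, S m) = ν := by
    apply Measure.restrict_eq_self_of_ae_mem
    rw [MeasureTheory.ae_iff]
    exact hfull
  have heq : (⨆ m, ∫⁻ x in S m, g x ∂ν) = ∫⁻ x, g x ∂ν := by
    have : ∀ m, ∫⁻ x in S m, g x ∂ν = ∫⁻ x, (S m).indicator g x ∂ν := fun m =>
      (lintegral_indicator (hSm m) g).symm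
    simp_rw [this]
    rw [← key]
    simp_rw [hsup]
    rw [lintegral_indicator (MeasurableSet.iUnion hSm) g, hres]
  rw [← heq]
  apply tendsto_atTop_iSup
  intro m n h
  simp_rw [← lintegral_indicator (hSm _) g]
  exact lintegral_mono (him h)

end Aux

/-- The weighted kernel `k(x,y) = -log(|x-y|·|f(x)-f(y)|) + Q(x) + Q(y)`. -/
noncomputable def wKernel (f : ℂ → ℂ) (Q : ℂ → ℝ) (p : ℂ × ℂ) : ℝ :=
  -Real.log (dist p.1 p.2 * dist (f p.1) (f p.2)) + Q p.1 + Q p.2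

/-- The weighted energy `E^Q(μ) = ∫∫ k(x,y) dμ dμ`, with values in `ℝ ∪ {±∞}`, defined as
the difference of the integrals of the positive and negative parts of the kernel. -/
noncomputable def energyQE (f : ℂ → ℂ) (Q : ℂ → ℝ) (μ : Measure ℂ) : EReal :=
  ((∫⁻ p : ℂ × ℂ, ENNReal.ofReal (wKernel f Q p) ∂(μ.prod μ) : ℝ≥0∞) : EReal)
    - ((∫⁻ p : ℂ × ℂ, ENNReal.ofReal (-(wKernel f Q p)) ∂(μ.prod μ) : ℝ≥0∞) : EReal)

/-- approximation of the energy from inside by compact sets.  For `K ⊆ ℂ`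
closed, `f` continuous on `K`, `Q` an `f`-admissible weight on `K` and `μ` a probability
measure on `K`, there are increasing compact sets `K_m ⊆ K` and probability measures `μ_m`
on `K_m` with `μ_m → μ` weakly and `E^{Q|_{K_m}}(μ_m) → E^Q(μ)` (possibly `+∞`). -/
theorem energy_approximation_by_compacts
    (K : Set ℂ) (hK : IsClosed K) (f : ℂ → ℂ) (hf : ContinuousOn f K)
    (Q : ℂ → ℝ) (hQlsc : LowerSemicontinuousOn Q K)
    -- `f`-admissibility: `ψ(z) = Q(z) - (1/2)log((1+|z|²)(1+|f(z)|²)) → ∞` as `|z| → ∞` in `K`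
    (hadm : ∀ M : ℝ, ∃ R : ℝ, ∀ z ∈ K, R ≤ ‖z‖ →
      M ≤ Q z - (1 / 2) * Real.log ((1 + ‖z‖ ^ 2) * (1 + ‖f z‖ ^ 2)))
    (μ : Measure ℂ) [IsProbabilityMeasure μ] (hμK : μ Kᶜ = 0) :
    ∃ (Km : ℕ → Set ℂ) (μm : ℕ → Measure ℂ),
      (∀ m, IsCompact (Km m) ∧ Km m ⊆ K) ∧ Monotone Km ∧
      (∀ m, IsProbabilityMeasure (μm m) ∧ μm m (Km m)ᶜ = 0) ∧
      (∀ g : BoundedContinuousFunction ℂ ℝ,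
        Filter.Tendsto (fun m => ∫ z, g z ∂(μm m)) Filter.atTop (nhds (∫ z, g z ∂μ))) ∧
      Filter.Tendsto (fun m => energyQE f Q (μm m)) Filter.atTop
        (nhds (energyQE f Q μ)) := by
  classical
  haveI : SFinite μ := inferInstance
  have hgint : ∀ g : BoundedContinuousFunction ℂ ℝ, Integrable (fun z => g z) μ :=
    fun g => g.integrable μ
  have MK : MeasurableSet K := hK.measurableSet
  obtain ⟨F, hFc, hFK⟩ := exists_cont_ext hK hf
  set Q' : ℂ → ℝ := K.indicator Q with hQ'def
  have hQ'm : Measurable Q' := lsc_indicator_measurable hK hQlsc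
  have hQ'K : ∀ x ∈ K, Q' x = Q x := fun x hx => Set.indicator_of_mem hx Q
  set k' : ℂ × ℂ → ℝ := wKernel F Q' with hk'def
  have hk'm : Measurable k' := by
    have h1 : Continuous fun p : ℂ × ℂ => dist p.1 p.2 * dist (F p.1) (F p.2) :=
      (continuous_fst.dist continuous_snd).mul
        ((hFc.comp continuous_fst).dist (hFc.comp continuous_snd))
    exact (((Real.measurable_log.comp h1.measurable).neg).add
      (hQ'm.comp measurable_fst)).add (hQ'm.comp measurable_snd)
  have hkK : ∀ p : ℂ × ℂ, p ∈ K ×ˢ K → wKernel f Q p = k' p := by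
    rintro ⟨x, y⟩ ⟨hx, hy⟩
    simp only [wKernel, hk'def, hFK x hx, hFK y hy, hQ'K x hx, hQ'K y hy]
  -- lower bound on the kernel
  obtain ⟨C₀, hC₀pos, hψ⟩ : ∃ C₀ : ℝ, 0 ≤ C₀ ∧ ∀ z ∈ K, -C₀ ≤
      Q z - 1/2 * Real.log ((1 + ‖z‖ ^ 2) * (1 + ‖f z‖ ^ 2)) := by
    obtain ⟨R₀, hR₀⟩ := hadm 0
    set Kc := K ∩ Metric.closedBall 0 (max R₀ 0) with hKcdef
    have hKc : IsCompact Kc := (isCompact_closedBall (0:ℂ) _).inter_left hK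
    have hinner : ContinuousOn
        (fun z => (1 + ‖z‖ ^ 2) * (1 + ‖f z‖ ^ 2)) Kc := by
      apply ContinuousOn.mul
      · exact (continuous_const.add ((continuous_norm.pow 2))).continuousOn
      · exact continuousOn_const.add
          (((continuous_norm.comp_continuousOn (hf.mono Set.inter_subset_left)).pow 2))
    have hpos : ∀ z ∈ Kc, (1 + ‖z‖ ^ 2) * (1 + ‖f z‖ ^ 2) ≠ 0 := by
      intro z _
      have := norm_nonneg z
      have := norm_nonneg (f z)
      positivity
    have hg : ContinuousOn
        (fun z => -(1/2 * Real.log ((1 + ‖z‖ ^ 2) * (1 + ‖f z‖ ^ 2)))) Kc :=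
      ((hinner.log hpos).const_smul (1/2 : ℝ)).neg
    have hlscψ : LowerSemicontinuousOn
        (fun z => Q z - 1/2 * Real.log ((1 + ‖z‖ ^ 2) * (1 + ‖f z‖ ^ 2)))
        Kc := by
      have heq : (fun z => Q z - 1/2 * Real.log ((1 + ‖z‖ ^ 2)
          * (1 + ‖f z‖ ^ 2)))
          = fun z => Q z + (-(1/2 * Real.log ((1 + ‖z‖ ^ 2)
            * (1 + ‖f z‖ ^ 2)))) := by
        funext z; ring
      rw [heq]
      exact (hQlsc.mono Set.inter_subset_left).add hg.lowerSemicontinuousOn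
    obtain ⟨Cmin, hCmin⟩ := lsc_bddBelow_of_isCompact hKc hlscψ
    refine ⟨max 0 (-Cmin), le_max_left _ _, fun z hz => ?_⟩
    by_cases hzR : R₀ ≤ ‖z‖
    · have h0 := hR₀ z hz hzR
      have := le_max_left 0 (-Cmin)
      push_cast at h0 ⊢
      linarith
    · have hzc : z ∈ Kc := by
        refine ⟨hz, ?_⟩
        simp only [Metric.mem_closedBall, Complex.dist_eq, sub_zero]
        exact ((lt_of_not_ge hzR).le.trans (le_max_left _ _))
      have h0 := hCmin z hzc
      have := le_max_right 0 (-Cmin)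
      linarith
  have hkbd : ∀ p ∈ K ×ˢ K, -(wKernel f Q p) ≤ 2 * C₀ := by
    rintro ⟨x, y⟩ ⟨hx, hy⟩
    have hl := log_kernel_bound f x y
    have h1 := hψ x hx
    have h2 := hψ y hy
    simp only [wKernel]
    push_cast at hl ⊢
    linarith
  -- product measure facts
  haveI hprodP : IsProbabilityMeasure (μ.prod μ) := inferInstance
  set ν := μ.prod μ with hνdef
  have hνK : ν ((K ×ˢ K)ᶜ) = 0 := by
    have hsub : (K ×ˢ K)ᶜ ⊆ (Kᶜ ×ˢ Set.univ) ∪ (Set.univ ×ˢ Kᶜ) := by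
      rintro ⟨x, y⟩ hp
      simp only [Set.mem_compl_iff, Set.mem_prod, not_and_or] at hp
      rcases hp with h | h
      · exact Or.inl ⟨h, trivial⟩
      · exact Or.inr ⟨trivial, h⟩
    refine le_antisymm ((measure_mono hsub).trans ?_) zero_le
    refine (measure_union_le _ _).trans ?_
    rw [hνdef]
    simp [Measure.prod_prod, hμK]
  have haeK : ∀ᵐ p ∂ν, p ∈ K ×ˢ K := by
    rw [MeasureTheory.ae_iff]
    exact hνK
  have hae : wKernel f Q =ᵐ[ν] k' := haeK.mono fun p hp => hkK p hp
  have haebd : ∀ᵐ p ∂ν, -(k' p) ≤ 2 * C₀ := haeK.mono fun p hp => by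
    rw [← hkK p hp]; exact hkbd p hp
  -- the exhausting sets
  set A : ℕ → Set ℂ := fun n => K ∩ Metric.closedBall 0 n with hAdef
  have hAmono : Monotone A := fun m n h =>
    Set.inter_subset_inter_right K (Metric.closedBall_subset_closedBall (by exact_mod_cast h))
  have hAU : (⋃ n, A n) = K := by
    apply Set.Subset.antisymm
    · exact Set.iUnion_subset fun n => Set.inter_subset_left
    · intro z hz
      refine Set.mem_iUnion.2 ⟨⌈‖z‖⌉₊, hz, ?_⟩
      simp only [Metric.mem_closedBall, Complex.dist_eq, sub_zero]
      exact Nat.le_ceil _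
  have hμK1 : μ K = 1 := by
    have h := measure_add_measure_compl (μ := μ) MK
    rwa [hμK, add_zero, measure_univ] at h
  obtain ⟨n₀, hn₀⟩ : ∃ n₀, 0 < μ (A n₀) := by
    have htA := tendsto_measure_iUnion_atTop (μ := μ) hAmono
    rw [hAU, hμK1] at htA
    have h := htA.eventually_mem (isOpen_Ioi.mem_nhds (zero_lt_one (α := ℝ≥0∞)))
    exact h.exists
  set Km : ℕ → Set ℂ := fun m => A (n₀ + m) with hKmdef
  set c : ℕ → ℝ≥0∞ := fun m => μ (Km m) with hcdef
  have hKmcompact : ∀ m, IsCompact (Km m) := fun m =>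
    (isCompact_closedBall (0:ℂ) _).inter_left hK
  have hKmsub : ∀ m, Km m ⊆ K := fun m => Set.inter_subset_left
  have hKmmono : Monotone Km := fun m n h => hAmono (by omega)
  have hKmmeas : ∀ m, MeasurableSet (Km m) := fun m => (hKmcompact m).measurableSet
  have hKmU : (⋃ m, Km m) = K := by
    apply Set.Subset.antisymm
    · exact Set.iUnion_subset fun m => Set.inter_subset_left
    · intro z hz
      refine Set.mem_iUnion.2 ⟨⌈‖z‖⌉₊, hz, ?_⟩
      simp only [Metric.mem_closedBall, Complex.dist_eq, sub_zero]
      calc ‖z‖ ≤ (⌈‖z‖⌉₊ : ℝ) := Nat.le_ceil _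
        _ ≤ ((n₀ + ⌈‖z‖⌉₊ : ℕ) : ℝ) := by exact_mod_cast Nat.le_add_left _ _
  have hc0 : ∀ m, 0 < c m := fun m =>
    lt_of_lt_of_le hn₀ (measure_mono (hAmono (by omega)))
  have hc1 : ∀ m, c m ≤ 1 := fun m => prob_le_one
  have hctop : ∀ m, c m ≠ ∞ := fun m => ((hc1 m).trans_lt (by norm_num)).ne
  have hctend : Filter.Tendsto c Filter.atTop (nhds 1) := by
    have := tendsto_measure_iUnion_atTop (μ := μ) hKmmono
    rwa [hKmU, hμK1] at this
  set μm : ℕ → Measure ℂ := fun m => (c m)⁻¹ • μ.restrict (Km m) with hμmdef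
  have hμmP : ∀ m, IsProbabilityMeasure (μm m) := by
    intro m
    constructor
    rw [hμmdef]
    simp only [Measure.smul_apply, Measure.restrict_apply MeasurableSet.univ,
      Set.univ_inter, smul_eq_mul]
    exact ENNReal.inv_mul_cancel (hc0 m).ne' (hctop m)
  have hμmc : ∀ m, μm m ((Km m)ᶜ) = 0 := by
    intro m
    rw [hμmdef]
    simp only [Measure.smul_apply, Measure.restrict_apply (hKmmeas m).compl, smul_eq_mul]
    rw [Set.compl_inter_self, measure_empty, mul_zero]
  refine ⟨Km, μm, fun m => ⟨hKmcompact m, hKmsub m⟩, hKmmono, fun m => ⟨hμmP m, hμmc m⟩, ?_, ?_⟩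
  · -- weak convergence
    intro g
    have hgi : Integrable (fun z => g z) μ := hgint g
    have hsi := tendsto_setIntegral_of_monotone hKmmeas hKmmono hgi.integrableOn
    rw [hKmU] at hsi
    have hres : μ.restrict K = μ := Measure.restrict_eq_self_of_ae_mem
      (by rw [MeasureTheory.ae_iff]; exact hμK)
    have hKint : ∫ z in K, (g : ℂ → ℝ) z ∂μ = ∫ z, g z ∂μ := by rw [hres]
    have hinv : Filter.Tendsto (fun m => ((c m)⁻¹).toReal) Filter.atTop (nhds 1) := by
      have h1 : Filter.Tendsto (fun m => (c m)⁻¹) Filter.atTop (nhds 1) := by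
        simpa using hctend.inv
      have h2 := (ENNReal.tendsto_toReal (a := 1) ENNReal.one_ne_top).comp h1
      simpa [Function.comp_def, ENNReal.toReal_inv] using h2
    have hfin := hinv.smul hsi
    rw [hKint, one_smul] at hfin
    refine Filter.Tendsto.congr (fun m => ?_) hfin
    exact (integral_smul_measure _ _).symm
  · -- energy convergence
    haveI hνP : IsProbabilityMeasure ν := by rw [hνdef]; infer_instance
    set pos : ℂ × ℂ → ℝ≥0∞ := fun p => ENNReal.ofReal (k' p) with hposdef
    set neg : ℂ × ℂ → ℝ≥0∞ := fun p => ENNReal.ofReal (-(k' p)) with hnegdef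
    have hposm : Measurable pos := ENNReal.measurable_ofReal.comp hk'm
    have hnegm : Measurable neg := ENNReal.measurable_ofReal.comp hk'm.neg
    set Sm : ℕ → Set (ℂ × ℂ) := fun m => Km m ×ˢ Km m with hSmdef
    have hSmmeas : ∀ m, MeasurableSet (Sm m) := fun m => (hKmmeas m).prod (hKmmeas m)
    have hSmono : Monotone Sm := fun m n h => Set.prod_mono (hKmmono h) (hKmmono h)
    have hSU : (⋃ m, Sm m) = K ×ˢ K := by
      apply Set.Subset.antisymm
      · exact Set.iUnion_subset fun m => Set.prod_mono (hKmsub m) (hKmsub m)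
      · rintro ⟨x, y⟩ ⟨hx, hy⟩
        rw [← hKmU] at hx hy
        rcases Set.mem_iUnion.1 hx with ⟨i, hi⟩
        rcases Set.mem_iUnion.1 hy with ⟨j, hj⟩
        exact Set.mem_iUnion.2 ⟨max i j,
          hKmmono (le_max_left i j) hi, hKmmono (le_max_right i j) hj⟩
    have hfull : ν ((⋃ m, Sm m)ᶜ) = 0 := by rw [hSU]; exact hνK
    have hPt := tendsto_setLIntegral_mono_sets ν Sm hSmmeas hSmono pos hposm hfull
    have hNt := tendsto_setLIntegral_mono_sets ν Sm hSmmeas hSmono neg hnegm hfull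
    set P : ℝ≥0∞ := ∫⁻ p, pos p ∂ν with hPdef
    set N : ℝ≥0∞ := ∫⁻ p, neg p ∂ν with hNdef
    have hNfin : N ≠ ∞ := by
      have hb : N ≤ ENNReal.ofReal (2 * C₀) * ν Set.univ := by
        rw [← lintegral_const]
        exact lintegral_mono_ae (haebd.mono fun p hp => ENNReal.ofReal_le_ofReal hp)
      refine (hb.trans_lt ?_).ne
      rw [measure_univ, mul_one]
      exact ENNReal.ofReal_lt_top
    have henergyμ : energyQE f Q μ = (P : EReal) - (N : EReal) := by
      have e1 : ∫⁻ p, ENNReal.ofReal (wKernel f Q p) ∂(μ.prod μ) = P :=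
        lintegral_congr_ae (hae.mono fun p hp => by rw [hposdef]; simp only; rw [hp])
      have e2 : ∫⁻ p, ENNReal.ofReal (-(wKernel f Q p)) ∂(μ.prod μ) = N :=
        lintegral_congr_ae (hae.mono fun p hp => by rw [hnegdef]; simp only; rw [hp])
      rw [energyQE, e1, e2]
    have henergym : ∀ m, energyQE f Q (μm m)
        = (((c m)⁻¹ * (c m)⁻¹ * ∫⁻ p in Sm m, pos p ∂ν : ℝ≥0∞) : EReal)
          - (((c m)⁻¹ * (c m)⁻¹ * ∫⁻ p in Sm m, neg p ∂ν : ℝ≥0∞) : EReal) := by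
      intro m
      have hprod : (μm m).prod (μm m) = ((c m)⁻¹ * (c m)⁻¹) • ν.restrict (Sm m) := by
        haveI : IsFiniteMeasure (μ.restrict (Km m)) := by
          constructor
          rw [Measure.restrict_apply_univ]
          exact (hc1 m).trans_lt ENNReal.one_lt_top
        rw [hμmdef]
        simp only
        rw [smul_prod_smul _ (ENNReal.inv_ne_top.2 (hc0 m).ne'), Measure.prod_restrict]
      have hr : wKernel f Q =ᵐ[ν.restrict (Sm m)] k' := ae_restrict_of_ae hae
      have e1 : ∫⁻ p, ENNReal.ofReal (wKernel f Q p) ∂(ν.restrict (Sm m))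
          = ∫⁻ p in Sm m, pos p ∂ν :=
        lintegral_congr_ae (hr.mono fun p hp => by rw [hposdef]; simp only; rw [hp])
      have e2 : ∫⁻ p, ENNReal.ofReal (-(wKernel f Q p)) ∂(ν.restrict (Sm m))
          = ∫⁻ p in Sm m, neg p ∂ν :=
        lintegral_congr_ae (hr.mono fun p hp => by rw [hnegdef]; simp only; rw [hp])
      rw [energyQE, hprod, lintegral_smul_measure, lintegral_smul_measure, e1, e2]
      rfl
    rw [henergyμ]
    have hinv : Filter.Tendsto (fun m => (c m)⁻¹) Filter.atTop (nhds 1) := by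
      simpa using hctend.inv
    have h2 : Filter.Tendsto (fun m => (c m)⁻¹ * (c m)⁻¹) Filter.atTop (nhds 1) := by
      simpa using ENNReal.Tendsto.mul hinv (Or.inl one_ne_zero)
        hinv (Or.inr ENNReal.one_ne_top)
    have hxt : Filter.Tendsto (fun m => (c m)⁻¹ * (c m)⁻¹ * ∫⁻ p in Sm m, pos p ∂ν)
        Filter.atTop (nhds P) := by
      simpa using ENNReal.Tendsto.mul h2 (Or.inl one_ne_zero) hPt (Or.inr ENNReal.one_ne_top)
    have hyt : Filter.Tendsto (fun m => (c m)⁻¹ * (c m)⁻¹ * ∫⁻ p in Sm m, neg p ∂ν)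
        Filter.atTop (nhds N) := by
      simpa using ENNReal.Tendsto.mul h2 (Or.inl one_ne_zero) hNt (Or.inr ENNReal.one_ne_top)
    have hx' : Filter.Tendsto (fun m => (((c m)⁻¹ * (c m)⁻¹ * ∫⁻ p in Sm m, pos p ∂ν
        : ℝ≥0∞) : EReal)) Filter.atTop (nhds (P : EReal)) :=
      EReal.tendsto_coe_ennreal.2 hxt
    have hy' : Filter.Tendsto (fun m => -(((c m)⁻¹ * (c m)⁻¹ * ∫⁻ p in Sm m, neg p ∂ν
        : ℝ≥0∞) : EReal)) Filter.atTop (nhds (-(N : EReal))) :=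
      (EReal.tendsto_coe_ennreal.2 hyt).neg
    have hcont : ContinuousAt (fun q : EReal × EReal => q.1 + q.2) ((P : EReal), -(N : EReal)) := by
      apply EReal.continuousAt_add
      · right
        simp only [ne_eq, EReal.neg_eq_bot_iff]
        simp [hNfin]
      · right
        simp
    have hadd := hcont.tendsto.comp (hx'.prodMk_nhds hy')
    have hX : Filter.Tendsto (fun m =>
        (((c m)⁻¹ * (c m)⁻¹ * ∫⁻ p in Sm m, pos p ∂ν : ℝ≥0∞) : EReal)
          - (((c m)⁻¹ * (c m)⁻¹ * ∫⁻ p in Sm m, neg p ∂ν : ℝ≥0∞) : EReal)) Filter.atTop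
        (nhds ((P : EReal) - (N : EReal))) := by
      simp only [sub_eq_add_neg]
      exact hadd
    exact Filter.Tendsto.congr (fun m => (henergym m).symm) hX
end
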